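/- arXiv:2602.12446 — 6 statements merged into one kernel-verified Lean document; each statement's English description precedes it below -/
import Mathlib

section
/- If 𝒢 = (V, E₀, …, E_{τ−1}) is a temporal graph such that every snapshot has at most k edges (|E_t| ≤ k for all t), then the expanded twin-width of 𝒢 satisfies tww_→(𝒢) ≤ k + 3. -/
open SimpleGraph

/-- A temporal graph: a sequence of snapshot graphs over a common vertex set. -/
structure TemporalGraph (V : Type) (τ : ℕ) where
  snapshot : Fin τ → SimpleGraph V

namespace TemporalGraph

variable {V : Type} {τ : ℕ}

/-- The static expansion graph `𝒢_→` on `V × Fin τ`. -/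
def expansion (𝒢 : TemporalGraph V τ) : SimpleGraph (V × Fin τ) :=
  SimpleGraph.fromRel (fun a b =>
    (a.2 = b.2 ∧ (𝒢.snapshot a.2).Adj a.1 b.1) ∨
    (a.1 = b.1 ∧ (a.2 : ℕ) + 1 = (b.2 : ℕ)))

/-- The union graph `𝒢_↓`. -/
def unionGraph (𝒢 : TemporalGraph V τ) : SimpleGraph V := ⨆ t, 𝒢.snapshot t

end TemporalGraph

/-- A tree decomposition of a graph. -/
structure TreeDecomp {V : Type} (G : SimpleGraph V) where
  ι : Type
  tree : SimpleGraph ι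
  isTree : tree.IsTree
  bag : ι → Finset V
  cover : ∀ v : V, ∃ i, v ∈ bag i
  edgeCover : ∀ ⦃u v : V⦄, G.Adj u v → ∃ i, u ∈ bag i ∧ v ∈ bag i
  coherent : ∀ v : V, (tree.induce {i | v ∈ bag i}).Connected

/-- `G` has a tree decomposition of width at most `w`. -/
def TreewidthLE {V : Type} (G : SimpleGraph V) (w : ℕ) : Prop :=
  ∃ d : TreeDecomp G, ∀ i, (d.bag i).card ≤ w + 1

/-- The tree-width of `G`, as an extended natural number. -/
noncomputable def treewidth {V : Type} (G : SimpleGraph V) : ℕ∞ :=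
  sInf {w : ℕ∞ | ∃ n : ℕ, TreewidthLE G n ∧ w = n}

/-- Homogeneity of a pair of sets in a graph: complete or anticomplete. -/
def homog {α : Type} (G : SimpleGraph α) (X Y : Set α) : Prop :=
  (∀ x ∈ X, ∀ y ∈ Y, G.Adj x y) ∨ (∀ x ∈ X, ∀ y ∈ Y, ¬ G.Adj x y)

/-- A contraction sequence: a sequence of partitions from singletons to the
trivial partition, each step merging exactly two parts. -/
structure ContractionSeq (α : Type) where
  n : ℕ
  P : Fin (n + 1) → Set (Set α)
  isPartition : ∀ i, Setoid.IsPartition (P i)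
  first : P 0 = {S | ∃ v : α, S = {v}}
  last : P (Fin.last n) = {Set.univ}
  step : ∀ i : Fin n, ∃ X Y, X ∈ P i.castSucc ∧ Y ∈ P i.castSucc ∧ X ≠ Y ∧
    P i.succ = insert (X ∪ Y) (P i.castSucc \ {X, Y})

/-- Every part has at most `d` red (non-homogeneous) neighbours throughout. -/
def ContractionSeq.RedDegLE {α : Type} (c : ContractionSeq α)
    (hom : Set α → Set α → Prop) (d : ℕ) : Prop :=
  ∀ i, ∀ X ∈ c.P i, {Y | Y ∈ c.P i ∧ Y ≠ X ∧ ¬ hom X Y}.ncard ≤ d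

/-- `G` admits a `d`-contraction sequence. -/
def TwinwidthLE {α : Type} (G : SimpleGraph α) (d : ℕ) : Prop :=
  ∃ c : ContractionSeq α, c.RedDegLE (homog G) d

/-- The twin-width of `G`, as an extended natural number. -/
noncomputable def twinwidth {α : Type} (G : SimpleGraph α) : ℕ∞ :=
  sInf {w : ℕ∞ | ∃ d : ℕ, TwinwidthLE G d ∧ w = d}


namespace TwwAux

variable {V : Type} {N τ : ℕ}

lemma div_helper {τ m q s : ℕ} (hτ : 0 < τ) (h : m = τ * q + s) (hs : s < τ) :
    m / τ = q := by
  subst h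
  rw [Nat.mul_add_div hτ, Nat.div_eq_of_lt hs, add_zero]

/-- level of row `t` after `i` steps of phase 1. -/
def lev (τ i t : ℕ) : ℕ := (i + (τ - 1 - t)) / τ

lemma lev_adj (hτ : 0 < τ) (i t : ℕ) (ht : t + 1 < τ) :
    lev τ i (t + 1) ≤ lev τ i t ∧ lev τ i t ≤ lev τ i (t + 1) + 1 := by
  have hnum : i + (τ - 1 - t) = (i + (τ - 1 - (t + 1))) + 1 := by omega
  unfold lev
  rw [hnum]
  constructor
  · exact Nat.div_le_div_right (Nat.le_succ _)
  · calc (i + (τ - 1 - (t + 1)) + 1) / τ ≤ (i + (τ - 1 - (t + 1)) + τ) / τ :=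
        Nat.div_le_div_right (by omega)
    _ = (i + (τ - 1 - (t + 1))) / τ + 1 := Nat.add_div_right _ hτ

def blockAt (e : V ≃ Fin N) (w : ℕ) (v : V) : Set V :=
  if (e v : ℕ) ≤ w then {u | (e u : ℕ) ≤ w} else {v}

lemma mem_blockAt_self (e : V ≃ Fin N) (w : ℕ) (v : V) : v ∈ blockAt e w v := by
  unfold blockAt
  split_ifs with h
  · exact h
  · exact rfl

lemma blockAt_eq_of_mem {e : V ≃ Fin N} {w : ℕ} {v u : V} (h : u ∈ blockAt e w v) :
    blockAt e w u = blockAt e w v := by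
  unfold blockAt at h ⊢
  by_cases hv : (e v : ℕ) ≤ w
  · rw [if_pos hv] at h ⊢
    have h' : (e u : ℕ) ≤ w := h
    rw [if_pos h']
  · rw [if_neg hv] at h ⊢
    rw [Set.mem_singleton_iff] at h
    subst h
    rw [if_neg hv]

/-- canonical "small" representative of the block of `v`. -/
def vmin (e : V ≃ Fin N) (w : ℕ) (v : V) : V :=
  if (e v : ℕ) ≤ w then e.symm ⟨0, Nat.lt_of_le_of_lt (Nat.zero_le _) (e v).isLt⟩ else v

/-- canonical "large" representative of the block of `v`. -/
def vmax (e : V ≃ Fin N) (w : ℕ) (v : V) : V :=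
  if (e v : ℕ) ≤ w then (if h2 : w < N then e.symm ⟨w, h2⟩ else v) else v

/-- coarsening: at any level `w' ≥ w`, all of `blockAt e w v` lies in the block of `vmin`. -/
lemma blockAt_up {e : V ≃ Fin N} {w w' : ℕ} {v u : V} (h : u ∈ blockAt e w v)
    (hw : w ≤ w') : blockAt e w' u = blockAt e w' (vmin e w v) := by
  unfold blockAt at h
  unfold blockAt vmin
  by_cases hv : (e v : ℕ) ≤ w
  · rw [if_pos hv] at h
    have hu : (e u : ℕ) ≤ w' := le_trans h hw
    have h0 : (e (e.symm ⟨0, Nat.lt_of_le_of_lt (Nat.zero_le _) (e v).isLt⟩) : ℕ) ≤ w' := by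
      simp
    rw [if_pos hv, if_pos hu, if_pos h0]
  · rw [if_neg hv] at h
    rw [Set.mem_singleton_iff] at h
    subst h
    rw [if_neg hv]

/-- refining one step: at level `w'` with `w' = w` or `w'+1 = w`, each element of the
block of `v` at level `w` lies in the block of `vmin` or of `vmax`. -/
lemma blockAt_down {e : V ≃ Fin N} {w w' : ℕ} {v u : V} (h : u ∈ blockAt e w v)
    (hw : w' = w ∨ w' + 1 = w) :
    blockAt e w' u = blockAt e w' (vmin e w v) ∨
      blockAt e w' u = blockAt e w' (vmax e w v) := by
  unfold blockAt at h
  unfold blockAt vmin vmax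
  by_cases hv : (e v : ℕ) ≤ w
  · rw [if_pos hv] at h
    have hu2 : (e u : ℕ) ≤ w := h
    rw [if_pos hv, if_pos hv]
    by_cases hu : (e u : ℕ) ≤ w'
    · left
      have h0 : (e (e.symm ⟨0, Nat.lt_of_le_of_lt (Nat.zero_le _) (e v).isLt⟩) : ℕ) ≤ w' := by
        simp
      rw [if_pos hu, if_pos h0]
    · right
      -- e u > w', e u ≤ w, so w' + 1 = w and e u = w
      have hw' : w' + 1 = w := by
        rcases hw with h1 | h1
        · omega
        · exact h1
      have heu : (e u : ℕ) = w := by omega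
      have hwN : w < N := heu ▸ (e u).isLt
      rw [dif_pos hwN]
      have huvmax : u = e.symm ⟨w, hwN⟩ := by
        apply e.injective
        rw [Equiv.apply_symm_apply]
        exact Fin.ext heu
      subst huvmax
      rfl
  · rw [if_neg hv] at h
    rw [Set.mem_singleton_iff] at h
    subst h
    rw [if_neg hv]
    exact Or.inl rfl

/-- The part containing cell `c` after `i` contraction steps. -/
def pt (e : V ≃ Fin N) (i : ℕ) (c : V × Fin τ) : Set (V × Fin τ) :=
  if i ≤ (N - 1) * τ then
    {d | d.2 = c.2 ∧ d.1 ∈ blockAt e (lev τ i (c.2 : ℕ)) c.1}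
  else if (c.2 : ℕ) ≤ i - (N - 1) * τ then {d | (d.2 : ℕ) ≤ i - (N - 1) * τ}
  else {d | d.2 = c.2}

lemma mem_pt_self (e : V ≃ Fin N) (i : ℕ) (c : V × Fin τ) : c ∈ pt e i c := by
  unfold pt
  split_ifs with h1 h2
  · exact ⟨rfl, mem_blockAt_self e _ c.1⟩
  · exact h2
  · exact rfl

lemma pt_eq_of_mem {e : V ≃ Fin N} {i : ℕ} {a c : V × Fin τ} (h : a ∈ pt e i c) :
    pt e i a = pt e i c := by
  by_cases h1 : i ≤ (N - 1) * τ
  · rw [pt, if_pos h1] at h ⊢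
    rw [pt, if_pos h1]
    obtain ⟨h2, h3⟩ := h
    ext d
    simp only [Set.mem_setOf_eq, h2, blockAt_eq_of_mem h3]
  · rw [pt, if_neg h1] at h ⊢
    rw [pt, if_neg h1]
    by_cases h2 : (c.2 : ℕ) ≤ i - (N - 1) * τ
    · rw [if_pos h2] at h ⊢
      have h3 : (a.2 : ℕ) ≤ i - (N - 1) * τ := h
      rw [if_pos h3]
    · rw [if_neg h2] at h ⊢
      have h3 : a.2 = c.2 := h
      have h4 : ¬ (a.2 : ℕ) ≤ i - (N - 1) * τ := by rw [h3]; exact h2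
      rw [if_neg h4]
      ext d
      simp only [Set.mem_setOf_eq, h3]

/-- the partition after `i` steps. -/
def Parts (e : V ≃ Fin N) (τ : ℕ) (i : ℕ) : Set (Set (V × Fin τ)) :=
  {S | ∃ c, S = pt e i c}

lemma eq_pt_of_mem_parts {e : V ≃ Fin N} {i : ℕ} {Y : Set (V × Fin τ)}
    (hY : Y ∈ Parts e τ i) {y : V × Fin τ} (hy : y ∈ Y) : Y = pt e i y := by
  obtain ⟨c, rfl⟩ := hY
  exact (pt_eq_of_mem hy).symm

lemma isPartition_parts (e : V ≃ Fin N) (i : ℕ) :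
    Setoid.IsPartition (Parts e τ i) := by
  constructor
  · rintro ⟨c, hc⟩
    exact absurd (hc ▸ mem_pt_self e i c) (Set.notMem_empty c)
  · intro a
    refine ⟨pt e i a, ⟨⟨a, rfl⟩, mem_pt_self e i a⟩, ?_⟩
    rintro S ⟨hS, haS⟩
    exact eq_pt_of_mem_parts hS haS

/-- generic step lemma: if `pt` at time `i+1` is the pointwise merge of the parts
of `x` and `y`, then the partitions make a legal contraction step. -/
lemma parts_step {e : V ≃ Fin N} {i : ℕ} {x y : V × Fin τ}
    (hne : pt e i x ≠ pt e i y)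
    (hin : ∀ c, c ∈ pt e i x ∪ pt e i y → pt e (i + 1) c = pt e i x ∪ pt e i y)
    (hout : ∀ c, c ∉ pt e i x ∪ pt e i y → pt e (i + 1) c = pt e i c) :
    ∃ X Y, X ∈ Parts e τ i ∧ Y ∈ Parts e τ i ∧ X ≠ Y ∧
      Parts e τ (i + 1) = insert (X ∪ Y) (Parts e τ i \ {X, Y}) := by
  refine ⟨pt e i x, pt e i y, ⟨x, rfl⟩, ⟨y, rfl⟩, hne, ?_⟩
  ext S
  constructor
  · rintro ⟨c, rfl⟩
    by_cases hc : c ∈ pt e i x ∪ pt e i y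
    · rw [hin c hc]
      exact Set.mem_insert _ _
    · rw [hout c hc]
      refine Set.mem_insert_iff.mpr (Or.inr ⟨⟨c, rfl⟩, ?_⟩)
      simp only [Set.mem_insert_iff, Set.mem_singleton_iff]
      push_neg
      constructor
      · intro h
        exact hc (Or.inl (h ▸ mem_pt_self e i c))
      · intro h
        exact hc (Or.inr (h ▸ mem_pt_self e i c))
  · intro hS
    rcases Set.mem_insert_iff.mp hS with h | ⟨⟨c, rfl⟩, hnotin⟩
    · refine ⟨x, ?_⟩
      rw [hin x (Or.inl (mem_pt_self e i x))]
      exact h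
    · simp only [Set.mem_insert_iff, Set.mem_singleton_iff] at hnotin
      push_neg at hnotin
      refine ⟨c, (hout c ?_).symm⟩
      rintro (h | h)
      · exact hnotin.1 (pt_eq_of_mem h)
      · exact hnotin.2 (pt_eq_of_mem h)

lemma blockAt_zero (e : V ≃ Fin N) (v : V) : blockAt e 0 v = {v} := by
  unfold blockAt
  split_ifs with h
  · ext u
    simp only [Set.mem_setOf_eq, Set.mem_singleton_iff, Nat.le_zero]
    constructor
    · intro hu
      apply e.injective
      exact Fin.ext (by omega)
    · rintro rfl
      omega
  · rfl

lemma pt_zero (hτ : 0 < τ) (e : V ≃ Fin N) (c : V × Fin τ) : pt e 0 c = {c} := by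
  have h0 : lev τ 0 (c.2 : ℕ) = 0 := by
    unfold lev
    exact Nat.div_eq_of_lt (by have := c.2.isLt; omega)
  rw [pt, if_pos (Nat.zero_le _), h0, blockAt_zero]
  ext d
  simp only [Set.mem_setOf_eq, Set.mem_singleton_iff, Prod.ext_iff]
  tauto

lemma parts_zero (hτ : 0 < τ) (e : V ≃ Fin N) :
    Parts e τ 0 = {S : Set (V × Fin τ) | ∃ v, S = {v}} := by
  ext S
  constructor
  · rintro ⟨c, rfl⟩
    exact ⟨c, pt_zero hτ e c⟩
  · rintro ⟨c, rfl⟩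
    exact ⟨c, (pt_zero hτ e c).symm⟩

lemma pt_last (hτ : 0 < τ) (hN : 0 < N) (e : V ≃ Fin N) (c : V × Fin τ) :
    pt e (N * τ - 1) c = Set.univ := by
  have hA : (N - 1) * τ + τ = N * τ := by
    have : (N - 1) * τ = N * τ - τ := by rw [Nat.sub_mul, one_mul]
    rw [this]
    have : τ ≤ N * τ := Nat.le_mul_of_pos_left τ hN
    omega
  by_cases h1 : τ = 1
  · subst h1
    have hb : N * 1 - 1 ≤ (N - 1) * 1 := by omega
    rw [pt, if_pos hb]
    have hl : lev 1 (N * 1 - 1) (c.2 : ℕ) = N - 1 := by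
      have hc2 : (c.2 : ℕ) = 0 := by have := c.2.isLt; omega
      unfold lev
      exact div_helper Nat.one_pos (q := N - 1) (s := 0) (by omega) (by omega)
    rw [hl]
    ext d
    simp only [Set.mem_setOf_eq, Set.mem_univ, iff_true]
    constructor
    · exact Fin.ext (by have := d.2.isLt; have := c.2.isLt; omega)
    · unfold blockAt
      have h2 : (e c.1 : ℕ) ≤ N - 1 := by have := (e c.1).isLt; omega
      rw [if_pos h2]
      have := (e d.1).isLt
      simpa using by omega
  · have hτ2 : 2 ≤ τ := by omega
    have hb : ¬ (N * τ - 1 ≤ (N - 1) * τ) := by omega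
    rw [pt, if_neg hb]
    have hr : N * τ - 1 - (N - 1) * τ = τ - 1 := by omega
    rw [hr, if_pos (by have := c.2.isLt; omega : (c.2 : ℕ) ≤ τ - 1)]
    ext d
    simp only [Set.mem_setOf_eq, Set.mem_univ, iff_true]
    have := d.2.isLt
    omega

lemma parts_last [Nonempty V] (hτ : 0 < τ) (hN : 0 < N) (e : V ≃ Fin N) :
    Parts e τ (N * τ - 1) = {(Set.univ : Set (V × Fin τ))} := by
  ext S
  constructor
  · rintro ⟨c, rfl⟩
    exact pt_last hτ hN e c
  · rintro rfl
    have c : V × Fin τ := ⟨Classical.arbitrary V, ⟨0, hτ⟩⟩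
    exact ⟨c, (pt_last hτ hN e c).symm⟩

lemma lev_eq_of (hτ : 0 < τ) {i t q s : ℕ} (h : i + (τ - 1 - t) = τ * q + s)
    (hs : s < τ) : lev τ i t = q :=
  div_helper hτ h hs

lemma lev_succ_ne (hτ : 0 < τ) {i t t' q : ℕ} (ht : t < τ) (ht' : t' < τ)
    (hne : t' ≠ t) (hi : i = τ * q + t) : lev τ (i + 1) t' = lev τ i t' := by
  have hexp : τ * (q + 1) = τ * q + τ := by ring
  rcases Nat.lt_or_ge t' t with h | h
  · have e1 : lev τ i t' = q + 1 :=
      lev_eq_of hτ (s := t - t' - 1) (by omega) (by omega)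
    have e2 : lev τ (i + 1) t' = q + 1 :=
      lev_eq_of hτ (s := t - t') (by omega) (by omega)
    rw [e1, e2]
  · have h2 : t < t' := by omega
    have e1 : lev τ i t' = q :=
      lev_eq_of hτ (s := τ - 1 - (t' - t)) (by omega) (by omega)
    have e2 : lev τ (i + 1) t' = q :=
      lev_eq_of hτ (s := τ - (t' - t)) (by omega) (by omega)
    rw [e1, e2]

lemma step_phase1 (hτ : 0 < τ) (hN : 0 < N) (e : V ≃ Fin N) {i : ℕ}
    (hi : i < (N - 1) * τ) :
    ∃ X Y, X ∈ Parts e τ i ∧ Y ∈ Parts e τ i ∧ X ≠ Y ∧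
      Parts e τ (i + 1) = insert (X ∪ Y) (Parts e τ i \ {X, Y}) := by
  have ht : i % τ < τ := Nat.mod_lt _ hτ
  set t := i % τ with htdef
  set q := i / τ with hqdef
  have hiq : i = τ * q + t := (Nat.div_add_mod i τ).symm
  have hqN : q + 1 ≤ N - 1 := by
    have : i / τ < N - 1 := (Nat.div_lt_iff_lt_mul hτ).mpr hi
    omega
  have hq1N : q + 1 < N := by omega
  have hexp : τ * (q + 1) = τ * q + τ := by ring
  have hlev : lev τ i t = q := lev_eq_of hτ (s := τ - 1) (by omega) (by omega)
  have hlev1 : lev τ (i + 1) t = q + 1 := lev_eq_of hτ (s := 0) (by omega) hτ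
  have hile : i ≤ (N - 1) * τ := le_of_lt hi
  have hi1 : i + 1 ≤ (N - 1) * τ := hi
  set tf : Fin τ := ⟨t, ht⟩ with htf
  set x : V × Fin τ := (e.symm ⟨0, hN⟩, tf) with hx
  set y : V × Fin τ := (e.symm ⟨q + 1, hq1N⟩, tf) with hy
  have htfv : (tf : ℕ) = t := rfl
  have hX : pt e i x = {d : V × Fin τ | d.2 = tf ∧ (e d.1 : ℕ) ≤ q} := by
    rw [pt, if_pos hile]
    ext d
    simp only [Set.mem_setOf_eq, hx, htfv, hlev]
    unfold blockAt
    rw [if_pos (by simp : (e (e.symm ⟨0, hN⟩) : ℕ) ≤ q)]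
    simp only [Set.mem_setOf_eq]
  have hY : pt e i y = {d : V × Fin τ | d.2 = tf ∧ d.1 = e.symm ⟨q + 1, hq1N⟩} := by
    rw [pt, if_pos hile]
    ext d
    simp only [Set.mem_setOf_eq, hy, htfv, hlev]
    unfold blockAt
    rw [if_neg (by simp : ¬ (e (e.symm ⟨q + 1, hq1N⟩) : ℕ) ≤ q)]
    simp only [Set.mem_singleton_iff]
  have hXY : pt e i x ∪ pt e i y = {d : V × Fin τ | d.2 = tf ∧ (e d.1 : ℕ) ≤ q + 1} := by
    rw [hX, hY]
    ext d
    simp only [Set.mem_union, Set.mem_setOf_eq]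
    constructor
    · rintro (⟨h1, h2⟩ | ⟨h1, h2⟩)
      · exact ⟨h1, by omega⟩
      · refine ⟨h1, ?_⟩
        rw [h2]
        simp
    · rintro ⟨h1, h2⟩
      by_cases h3 : (e d.1 : ℕ) ≤ q
      · exact Or.inl ⟨h1, h3⟩
      · refine Or.inr ⟨h1, ?_⟩
        apply e.injective
        rw [Equiv.apply_symm_apply]
        exact Fin.ext (by simpa using by omega)
  refine parts_step (x := x) (y := y) ?_ ?_ ?_
  · rw [hX, hY]
    intro hEq
    have hmem : (x : V × Fin τ) ∈ {d : V × Fin τ | d.2 = tf ∧ (e d.1 : ℕ) ≤ q} :=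
      ⟨rfl, by simp [hx]⟩
    rw [hEq] at hmem
    have h0 : (⟨0, hN⟩ : Fin N) = ⟨q + 1, hq1N⟩ := e.symm.injective hmem.2
    have h1 : (0 : ℕ) = q + 1 := congrArg Fin.val h0
    omega
  · intro c hc
    rw [hXY] at hc
    obtain ⟨hc2, hc1⟩ := hc
    rw [pt, if_pos hi1, hXY]
    ext d
    simp only [Set.mem_setOf_eq, hc2, htfv, hlev1]
    unfold blockAt
    rw [if_pos hc1]
    simp only [Set.mem_setOf_eq]
  · intro c hc
    rw [hXY] at hc
    simp only [Set.mem_setOf_eq] at hc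
    push_neg at hc
    rw [pt, if_pos hi1, pt, if_pos hile]
    by_cases h2 : c.2 = tf
    · have hc1 : ¬ (e c.1 : ℕ) ≤ q + 1 := by have := hc h2; omega
      ext d
      simp only [Set.mem_setOf_eq, h2, htfv, hlev1, hlev]
      unfold blockAt
      rw [if_neg hc1, if_neg (by omega : ¬ (e c.1 : ℕ) ≤ q)]
    · have hne2 : (c.2 : ℕ) ≠ t := by
        intro h
        exact h2 (Fin.ext (by rw [h, htfv]))
      rw [lev_succ_ne hτ ht c.2.isLt hne2 hiq]

lemma pt_phase2 (hτ : 0 < τ) (e : V ≃ Fin N) {i : ℕ} (hi : (N - 1) * τ ≤ i)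
    (c : V × Fin τ) :
    pt e i c = if (c.2 : ℕ) ≤ i - (N - 1) * τ then
        {d : V × Fin τ | (d.2 : ℕ) ≤ i - (N - 1) * τ}
      else {d : V × Fin τ | d.2 = c.2} := by
  rcases Nat.eq_or_lt_of_le hi with heq | hlt
  · subst heq
    rw [pt, if_pos (le_refl _)]
    have hexp : τ * (N - 1) = (N - 1) * τ := mul_comm _ _
    have hlev : lev τ ((N - 1) * τ) (c.2 : ℕ) = N - 1 :=
      lev_eq_of hτ (s := τ - 1 - (c.2 : ℕ)) (by omega) (by have := c.2.isLt; omega)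
    have hr : (N - 1) * τ - (N - 1) * τ = 0 := by omega
    rw [hlev, hr]
    unfold blockAt
    rw [if_pos (show (e c.1 : ℕ) ≤ N - 1 by have := (e c.1).isLt; omega)]
    split_ifs with h0
    · ext d
      simp only [Set.mem_setOf_eq]
      have hc2 : (c.2 : ℕ) = 0 := by omega
      constructor
      · rintro ⟨hd, _⟩
        rw [hd]
        omega
      · intro hd
        refine ⟨Fin.ext (by omega), ?_⟩
        have := (e d.1).isLt
        omega
    · ext d
      simp only [Set.mem_setOf_eq]
      constructor
      · exact fun h => h.1
      · intro h
        refine ⟨h, ?_⟩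
        have := (e d.1).isLt
        omega
  · rw [pt, if_neg (by omega)]

lemma step_phase2 (hτ : 0 < τ) (hN : 0 < N) (e : V ≃ Fin N) {i : ℕ}
    (hi : (N - 1) * τ ≤ i) (hi2 : i + 1 ≤ N * τ - 1) :
    ∃ X Y, X ∈ Parts e τ i ∧ Y ∈ Parts e τ i ∧ X ≠ Y ∧
      Parts e τ (i + 1) = insert (X ∪ Y) (Parts e τ i \ {X, Y}) := by
  have hA : (N - 1) * τ + τ = N * τ := by
    have h1 : (N - 1) * τ = N * τ - τ := by rw [Nat.sub_mul, one_mul]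
    have h2 : τ ≤ N * τ := Nat.le_mul_of_pos_left τ hN
    omega
  set r := i - (N - 1) * τ with hrdef
  have hr1 : r + 1 < τ := by omega
  have hrτ : r < τ := by omega
  set x : V × Fin τ := (e.symm ⟨0, hN⟩, ⟨r, hrτ⟩) with hx
  set y : V × Fin τ := (e.symm ⟨0, hN⟩, ⟨r + 1, hr1⟩) with hy
  have hX : pt e i x = {d : V × Fin τ | (d.2 : ℕ) ≤ r} := by
    rw [pt_phase2 hτ e hi, if_pos (show ((⟨r, hrτ⟩ : Fin τ) : ℕ) ≤ i - (N - 1) * τ from le_refl r)]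
  have hY : pt e i y = {d : V × Fin τ | d.2 = (⟨r + 1, hr1⟩ : Fin τ)} := by
    rw [pt_phase2 hτ e hi, if_neg (show ¬ ((⟨r + 1, hr1⟩ : Fin τ) : ℕ) ≤ i - (N - 1) * τ by
      simp only [Fin.val_mk]
      omega)]
  have hXY : pt e i x ∪ pt e i y = {d : V × Fin τ | (d.2 : ℕ) ≤ r + 1} := by
    rw [hX, hY]
    ext d
    simp only [Set.mem_union, Set.mem_setOf_eq]
    constructor
    · rintro (h | h)
      · omega
      · rw [h]
    · intro h
      by_cases h2 : (d.2 : ℕ) ≤ r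
      · exact Or.inl h2
      · exact Or.inr (Fin.ext (by simp only [Fin.val_mk]; omega))
  have hstep : i + 1 - (N - 1) * τ = r + 1 := by omega
  refine parts_step (x := x) (y := y) ?_ ?_ ?_
  · rw [hX, hY]
    intro hEq
    have hmem : (x : V × Fin τ) ∈ {d : V × Fin τ | (d.2 : ℕ) ≤ r} := le_refl r
    rw [hEq] at hmem
    have : ((⟨r, hrτ⟩ : Fin τ) : ℕ) = r + 1 := congrArg Fin.val hmem
    simp only [Fin.val_mk] at this
    omega
  · intro c hc
    rw [hXY] at hc
    rw [pt_phase2 hτ e (by omega : (N - 1) * τ ≤ i + 1), hstep,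
      if_pos (show (c.2 : ℕ) ≤ r + 1 from hc), hXY]
  · intro c hc
    rw [hXY] at hc
    simp only [Set.mem_setOf_eq, not_le] at hc
    rw [pt_phase2 hτ e (by omega : (N - 1) * τ ≤ i + 1), hstep,
      if_neg (by omega : ¬ (c.2 : ℕ) ≤ r + 1),
      pt_phase2 hτ e hi, if_neg (by omega : ¬ (c.2 : ℕ) ≤ i - (N - 1) * τ)]

lemma exists_adj_of_not_homog {α : Type} {G : SimpleGraph α} {X Y : Set α}
    (h : ¬ homog G X Y) : ∃ x ∈ X, ∃ y ∈ Y, G.Adj x y := by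
  unfold homog at h
  push_neg at h
  exact h.2

lemma adj_cases {𝒢 : TemporalGraph V τ} {a b : V × Fin τ}
    (h : (𝒢.expansion).Adj a b) :
    (a.2 = b.2 ∧ (𝒢.snapshot a.2).Adj a.1 b.1) ∨
    (a.1 = b.1 ∧ ((a.2 : ℕ) + 1 = (b.2 : ℕ) ∨ (b.2 : ℕ) + 1 = (a.2 : ℕ))) := by
  rw [TemporalGraph.expansion, SimpleGraph.fromRel_adj] at h
  obtain ⟨hne, h | h⟩ := h
  · rcases h with ⟨h1, h2⟩ | ⟨h1, h2⟩
    · exact Or.inl ⟨h1, h2⟩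
    · exact Or.inr ⟨h1, Or.inl h2⟩
  · rcases h with ⟨h1, h2⟩ | ⟨h1, h2⟩
    · refine Or.inl ⟨h1.symm, ?_⟩
      rw [h1] at h2
      exact h2.symm
    · exact Or.inr ⟨h1.symm, Or.inr h2⟩

lemma ncard_le_one_of_subsingleton {α : Type} {s : Set α} (h : s.Subsingleton) :
    s.ncard ≤ 1 := by
  rcases h.eq_empty_or_singleton with rfl | ⟨a, rfl⟩
  · simp
  · simp

lemma pt_congr_block {e : V ≃ Fin N} {i : ℕ} (hile : i ≤ (N - 1) * τ) {u w : V}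
    {m : Fin τ} (h : blockAt e (lev τ i (m : ℕ)) u = blockAt e (lev τ i (m : ℕ)) w) :
    pt e i (u, m) = pt e i (w, m) := by
  rw [pt, if_pos hile, pt, if_pos hile]
  ext d
  simp only [Set.mem_setOf_eq, h]

lemma red_phase1 (hτ : 0 < τ) (e : V ≃ Fin N) (𝒢 : TemporalGraph V τ) {k : ℕ}
    (hE : ∀ t : Fin τ, ((𝒢.snapshot t).edgeSet.ncard ≤ k)) {i : ℕ}
    (hile : i ≤ (N - 1) * τ) (c : V × Fin τ) :
    {Y | Y ∈ Parts e τ i ∧ Y ≠ pt e i c ∧ ¬ homog 𝒢.expansion (pt e i c) Y}.ncard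
      ≤ k + 3 := by
  classical
  haveI : Finite V := Finite.intro e
  set ℓ := lev τ i (c.2 : ℕ) with hldef
  set B := blockAt e ℓ c.1 with hBdef
  have hXf : pt e i c = {d : V × Fin τ | d.2 = c.2 ∧ d.1 ∈ B} := by
    rw [pt, if_pos hile]
  set S1 := {Z : Set (V × Fin τ) | ∃ m : Fin τ,
    (m : ℕ) + 1 = (c.2 : ℕ) ∧ Z = pt e i (vmin e ℓ c.1, m)} with hS1
  set S2 := {Z : Set (V × Fin τ) | ∃ m : Fin τ,
    (m : ℕ) = (c.2 : ℕ) + 1 ∧ Z = pt e i (vmin e ℓ c.1, m)} with hS2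
  set S3 := {Z : Set (V × Fin τ) | ∃ m : Fin τ,
    (m : ℕ) = (c.2 : ℕ) + 1 ∧ Z = pt e i (vmax e ℓ c.1, m)} with hS3
  set H := {Z : Set (V × Fin τ) | Z ∈ Parts e τ i ∧ Z ≠ pt e i c ∧
    ∃ p : V × V, p.1 ∈ B ∧ (p.2, c.2) ∈ Z ∧ (𝒢.snapshot c.2).Adj p.1 p.2} with hH
  have hsub : {Y | Y ∈ Parts e τ i ∧ Y ≠ pt e i c ∧ ¬ homog 𝒢.expansion (pt e i c) Y}
      ⊆ S1 ∪ (S2 ∪ (S3 ∪ H)) := by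
    rintro Y ⟨hYP, hYne, hYnh⟩
    obtain ⟨xx, hxx, yy, hyy, hadj⟩ := exists_adj_of_not_homog hYnh
    rw [hXf] at hxx
    obtain ⟨hx2, hx1⟩ := hxx
    have hYpt : Y = pt e i yy := eq_pt_of_mem_parts hYP hyy
    rcases adj_cases hadj with ⟨hsame, hsadj⟩ | ⟨hvert, hud⟩
    · refine Or.inr (Or.inr (Or.inr ⟨hYP, hYne, (xx.1, yy.1), hx1, ?_, ?_⟩))
      · have hyy2 : yy.2 = c.2 := by rw [← hsame, hx2]
        have heq : (yy.1, c.2) = yy := by rw [← hyy2]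
        rw [heq]
        exact hyy
      · rw [hx2] at hsadj
        exact hsadj
    · have hyyeq : yy = (xx.1, yy.2) := by rw [hvert]
      rcases hud with hup | hdown
      · have hm : (yy.2 : ℕ) = (c.2 : ℕ) + 1 := by rw [← hup, hx2]
        have hmlt : (c.2 : ℕ) + 1 < τ := hm ▸ yy.2.isLt
        obtain ⟨hl1, hl2⟩ := lev_adj hτ i (c.2 : ℕ) hmlt
        have hlev2 : lev τ i ((yy.2 : ℕ)) = lev τ i ((c.2 : ℕ) + 1) := by rw [hm]
        have hcases : lev τ i (yy.2 : ℕ) = ℓ ∨ lev τ i (yy.2 : ℕ) + 1 = ℓ := by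
          rw [hlev2]
          omega
        rcases blockAt_down hx1 hcases with hbl | hbl
        · refine Or.inr (Or.inl ⟨yy.2, hm, ?_⟩)
          rw [hYpt, hyyeq]
          exact pt_congr_block hile hbl
        · refine Or.inr (Or.inr (Or.inl ⟨yy.2, hm, ?_⟩))
          rw [hYpt, hyyeq]
          exact pt_congr_block hile hbl
      · have hm : (yy.2 : ℕ) + 1 = (c.2 : ℕ) := by rw [hdown, hx2]
        have hmlt : (yy.2 : ℕ) + 1 < τ := hm ▸ c.2.isLt
        obtain ⟨hl1, hl2⟩ := lev_adj hτ i (yy.2 : ℕ) hmlt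
        have hle : ℓ ≤ lev τ i (yy.2 : ℕ) := by
          have h3 : lev τ i ((yy.2 : ℕ) + 1) = ℓ := by rw [hm]
          omega
        refine Or.inl ⟨yy.2, hm, ?_⟩
        rw [hYpt, hyyeq]
        exact pt_congr_block hile (blockAt_up hx1 hle)
  have h1 : S1.ncard ≤ 1 := by
    apply ncard_le_one_of_subsingleton
    rintro Z1 ⟨m1, hm1, rfl⟩ Z2 ⟨m2, hm2, rfl⟩
    have hm : m1 = m2 := Fin.ext (by omega)
    rw [hm]
  have h2 : S2.ncard ≤ 1 := by
    apply ncard_le_one_of_subsingleton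
    rintro Z1 ⟨m1, hm1, rfl⟩ Z2 ⟨m2, hm2, rfl⟩
    have hm : m1 = m2 := Fin.ext (by omega)
    rw [hm]
  have h3 : S3.ncard ≤ 1 := by
    apply ncard_le_one_of_subsingleton
    rintro Z1 ⟨m1, hm1, rfl⟩ Z2 ⟨m2, hm2, rfl⟩
    have hm : m1 = m2 := Fin.ext (by omega)
    rw [hm]
  have hHcard : H.ncard ≤ k := by
    set F : Set (V × Fin τ) → Sym2 V := fun Z =>
      if h : ∃ p : V × V, p.1 ∈ B ∧ (p.2, c.2) ∈ Z ∧ (𝒢.snapshot c.2).Adj p.1 p.2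
      then s(h.choose.1, h.choose.2) else s(c.1, c.1) with hF
    have hmaps : ∀ Z ∈ H, F Z ∈ (𝒢.snapshot c.2).edgeSet := by
      rintro Z ⟨hZP, hZne, hex⟩
      simp only [hF]
      rw [dif_pos hex]
      exact hex.choose_spec.2.2
    have hinj : Set.InjOn F H := by
      rintro Z1 ⟨hP1, hne1, hex1⟩ Z2 ⟨hP2, hne2, hex2⟩ heq
      simp only [hF] at heq
      rw [dif_pos hex1, dif_pos hex2] at heq
      obtain ⟨ha1, hb1, hadj1⟩ := hex1.choose_spec
      obtain ⟨ha2, hb2, hadj2⟩ := hex2.choose_spec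
      rw [Sym2.eq_iff] at heq
      rcases heq with ⟨hq1, hq2⟩ | ⟨hq1, hq2⟩
      · rw [eq_pt_of_mem_parts hP1 hb1, eq_pt_of_mem_parts hP2 hb2, hq2]
      · exfalso
        apply hne2
        have hmemX : (hex2.choose.2, c.2) ∈ pt e i c := by
          rw [hXf]
          exact ⟨rfl, hq1 ▸ ha1⟩
        exact (eq_pt_of_mem_parts hP2 hb2).trans (pt_eq_of_mem hmemX)
    calc H.ncard ≤ (𝒢.snapshot c.2).edgeSet.ncard :=
          Set.ncard_le_ncard_of_injOn F hmaps hinj (Set.toFinite _)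
    _ ≤ k := hE c.2
  have hu1 := Set.ncard_union_le S1 (S2 ∪ (S3 ∪ H))
  have hu2 := Set.ncard_union_le S2 (S3 ∪ H)
  have hu3 := Set.ncard_union_le S3 H
  have hmono := Set.ncard_le_ncard hsub (Set.toFinite _)
  omega

lemma red_phase2 (hτ : 0 < τ) (e : V ≃ Fin N) (𝒢 : TemporalGraph V τ) {k i : ℕ}
    (hi : (N - 1) * τ ≤ i) (c : V × Fin τ) :
    {Y | Y ∈ Parts e τ i ∧ Y ≠ pt e i c ∧ ¬ homog 𝒢.expansion (pt e i c) Y}.ncard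
      ≤ k + 3 := by
  classical
  haveI : Finite V := Finite.intro e
  set r := i - (N - 1) * τ with hrdef
  have hvtx : ∀ (u w : V) (m : Fin τ), pt e i (u, m) = pt e i (w, m) := by
    intro u w m
    rw [pt_phase2 hτ e hi, pt_phase2 hτ e hi]
  set T1 := {Z : Set (V × Fin τ) | ∃ m : Fin τ,
    (m : ℕ) + 1 = (c.2 : ℕ) ∧ Z = pt e i (c.1, m)} with hT1
  set T2 := {Z : Set (V × Fin τ) | ∃ m : Fin τ,
    (m : ℕ) = (c.2 : ℕ) + 1 ∧ Z = pt e i (c.1, m)} with hT2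
  set T3 := {Z : Set (V × Fin τ) | ∃ m : Fin τ,
    (m : ℕ) = r + 1 ∧ Z = pt e i (c.1, m)} with hT3
  have hsub : {Y | Y ∈ Parts e τ i ∧ Y ≠ pt e i c ∧ ¬ homog 𝒢.expansion (pt e i c) Y}
      ⊆ T1 ∪ (T2 ∪ T3) := by
    rintro Y ⟨hYP, hYne, hYnh⟩
    obtain ⟨xx, hxx, yy, hyy, hadj⟩ := exists_adj_of_not_homog hYnh
    have hYpt : Y = pt e i yy := eq_pt_of_mem_parts hYP hyy
    have hYyy : Y = pt e i (c.1, yy.2) := hYpt.trans (hvtx yy.1 c.1 yy.2)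
    have hyynX : yy ∉ pt e i c := by
      intro h
      exact hYne (hYpt.trans (pt_eq_of_mem h))
    rw [pt_phase2 hτ e hi] at hxx hyynX
    by_cases hbc : (c.2 : ℕ) ≤ i - (N - 1) * τ
    · rw [if_pos hbc] at hxx hyynX
      have hxv : (xx.2 : ℕ) ≤ r := hxx
      have hyv : ¬ (yy.2 : ℕ) ≤ r := fun h => hyynX h
      rcases adj_cases hadj with ⟨hsame, _⟩ | ⟨hvert, hud⟩
      · exfalso
        have := congrArg Fin.val hsame
        omega
      · rcases hud with hup | hdown
        · exact Or.inr (Or.inr ⟨yy.2, by omega, hYyy⟩)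
        · exfalso
          omega
    · rw [if_neg hbc] at hxx hyynX
      have hx2 : xx.2 = c.2 := hxx
      have hx2v : (xx.2 : ℕ) = (c.2 : ℕ) := congrArg Fin.val hx2
      have hyne2 : yy.2 ≠ c.2 := fun h => hyynX h
      have hyne2v : (yy.2 : ℕ) ≠ (c.2 : ℕ) := fun h => hyne2 (Fin.ext h)
      rcases adj_cases hadj with ⟨hsame, _⟩ | ⟨hvert, hud⟩
      · exact absurd (hsame.symm.trans hx2) hyne2
      · rcases hud with hup | hdown
        · exact Or.inr (Or.inl ⟨yy.2, by omega, hYyy⟩)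
        · exact Or.inl ⟨yy.2, by omega, hYyy⟩
  have h1 : T1.ncard ≤ 1 := by
    apply ncard_le_one_of_subsingleton
    rintro Z1 ⟨m1, hm1, rfl⟩ Z2 ⟨m2, hm2, rfl⟩
    have hm : m1 = m2 := Fin.ext (by omega)
    rw [hm]
  have h2 : T2.ncard ≤ 1 := by
    apply ncard_le_one_of_subsingleton
    rintro Z1 ⟨m1, hm1, rfl⟩ Z2 ⟨m2, hm2, rfl⟩
    have hm : m1 = m2 := Fin.ext (by omega)
    rw [hm]
  have h3 : T3.ncard ≤ 1 := by
    apply ncard_le_one_of_subsingleton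
    rintro Z1 ⟨m1, hm1, rfl⟩ Z2 ⟨m2, hm2, rfl⟩
    have hm : m1 = m2 := Fin.ext (by omega)
    rw [hm]
  have hu1 := Set.ncard_union_le T1 (T2 ∪ T3)
  have hu2 := Set.ncard_union_le T2 T3
  have hmono := Set.ncard_le_ncard hsub (Set.toFinite _)
  omega

end TwwAux

/-- if every snapshot has at most k edges, then the expanded
twin-width satisfies tww_→(𝒢) ≤ k + 3. -/
theorem twinwidth_expansion_le_of_few_edges {V : Type} [Fintype V] [Nonempty V]
    {τ : ℕ} (hτ : 0 < τ) (𝒢 : TemporalGraph V τ) (k : ℕ)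
    (hE : ∀ t : Fin τ, ((𝒢.snapshot t).edgeSet.ncard ≤ k)) :
    twinwidth 𝒢.expansion ≤ ((k + 3 : ℕ) : ℕ∞) := by
  classical
  have hN : 0 < Fintype.card V := Fintype.card_pos
  set N := Fintype.card V with hNdef
  set e := Fintype.equivFin V with hedef
  have hA : (N - 1) * τ + τ = N * τ := by
    have h1 : (N - 1) * τ = N * τ - τ := by rw [Nat.sub_mul, one_mul]
    have h2 : τ ≤ N * τ := Nat.le_mul_of_pos_left τ hN
    omega
  have hn1 : 0 < N * τ := Nat.mul_pos hN hτ
  unfold twinwidth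
  apply sInf_le
  refine ⟨k + 3, ?_, rfl⟩
  refine ⟨{ n := N * τ - 1
            P := fun j => TwwAux.Parts e τ (j : ℕ)
            isPartition := fun j => TwwAux.isPartition_parts e (j : ℕ)
            first := ?_
            last := ?_
            step := ?_ }, ?_⟩
  · show TwwAux.Parts e τ ((0 : Fin (N * τ - 1 + 1)) : ℕ) = _
    rw [Fin.val_zero]
    exact TwwAux.parts_zero hτ e
  · show TwwAux.Parts e τ ((Fin.last (N * τ - 1)) : ℕ) = _
    rw [Fin.val_last]
    exact TwwAux.parts_last hτ hN e
  · intro j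
    have hjlt : (j : ℕ) < N * τ - 1 := j.isLt
    show ∃ X Y, X ∈ TwwAux.Parts e τ ((j.castSucc : Fin (N * τ - 1 + 1)) : ℕ) ∧
      Y ∈ TwwAux.Parts e τ ((j.castSucc : Fin (N * τ - 1 + 1)) : ℕ) ∧ X ≠ Y ∧
      TwwAux.Parts e τ ((j.succ : Fin (N * τ - 1 + 1)) : ℕ) =
        insert (X ∪ Y) (TwwAux.Parts e τ ((j.castSucc : Fin (N * τ - 1 + 1)) : ℕ) \ {X, Y})
    rw [Fin.coe_castSucc, Fin.val_succ]
    by_cases hp : (j : ℕ) < (N - 1) * τ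
    · exact TwwAux.step_phase1 hτ hN e hp
    · exact TwwAux.step_phase2 hτ hN e (by omega) (by omega)
  · intro j X hX
    obtain ⟨c, rfl⟩ := hX
    by_cases hp : (j : ℕ) ≤ (N - 1) * τ
    · exact TwwAux.red_phase1 hτ e 𝒢 hE hp c
    · exact TwwAux.red_phase2 hτ e 𝒢 (le_of_lt (not_le.mp hp)) c
end

section
/- Let 𝒢 be a temporal graph and let 𝔗 be a tree decomposition of its static expansion graph 𝒢_→ of width w. Then the tree decomposition obtained by adding to every bag all untime vertices u ∈ V such that (u,t) is in that bag for some t, is a tree decomposition of the σ₁-structure S₁(𝒢) (i.e., of its Gaifman graph), of width at most 2w + 1. In particular tw(S₁(𝒢)) ≤ 2·tw(𝒢_→) + 1. -/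
open SimpleGraph

/-- The Gaifman graph of the σ₁-structure of a temporal graph: domain
V ⊕ (V × Fin τ), with relations adj, succ, app. -/
def gaifmanSigma1 {V : Type} {τ : ℕ} (𝒢 : TemporalGraph V τ) :
    SimpleGraph (V ⊕ V × Fin τ) :=
  SimpleGraph.fromRel (fun a b =>
    match a, b with
    | Sum.inr p, Sum.inr q =>
        (p.2 = q.2 ∧ (𝒢.snapshot p.2).Adj p.1 q.1) ∨
        (p.1 = q.1 ∧ (p.2 : ℕ) + 1 = (q.2 : ℕ))
    | Sum.inl v, Sum.inr p => v = p.1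
    | _, _ => False)


open SimpleGraph

section Aux

variable {α : Type}

lemma induce_singleton_connected' (G : SimpleGraph α) (x : α) :
    (G.induce {x}).Connected := by
  rw [connected_iff]
  refine ⟨fun a b => ?_, ⟨⟨x, rfl⟩⟩⟩
  have : a = b := Subtype.ext ((a.2 : a.1 = x).trans (b.2 : b.1 = x).symm)
  exact this ▸ Reachable.refl _

lemma reachable_eq_of_isolated {G : SimpleGraph α} {x y : α}
    (h : ∀ z, ¬ G.Adj x z) (hr : G.Reachable x y) : x = y := by
  obtain ⟨w⟩ := hr
  cases w with
  | nil => rfl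
  | cons h' _ => exact absurd h' (h _)

/-- The star graph on `Option V` with centre `none`. -/
def starGraph (V : Type) : SimpleGraph (Option V) where
  Adj a b := (a = none ∧ b ≠ none) ∨ (b = none ∧ a ≠ none)
  symm := by tauto
  loopless := ⟨by rintro a (⟨h1, h2⟩ | ⟨h1, h2⟩) <;> exact h2 h1⟩

lemma starGraph_isTree (V : Type) : (_root_.starGraph V).IsTree := by
  constructor
  · rw [connected_iff]
    refine ⟨fun a b => ?_, ⟨none⟩⟩
    have key : ∀ c : Option V, (_root_.starGraph V).Reachable c none := by
      intro c
      cases c with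
      | none => exact Reachable.refl _
      | some v => exact Adj.reachable (Or.inr ⟨rfl, by simp⟩)
    exact (key a).trans (key b).symm
  · rw [isAcyclic_iff_forall_adj_isBridge]
    intro a b hab
    rw [isBridge_iff]
    refine fun hr => ?_
    -- one of a,b is none and the other is some v; the some-vertex is isolated after deletion
    rcases hab with ⟨ha, hb⟩ | ⟨hb, ha⟩
    · subst ha
      have : ∀ z, ¬ ((_root_.starGraph V) \ fromEdgeSet {s(none, b)}).Adj b z := by
        rintro z ⟨hadj, hne⟩
        rcases hadj with ⟨h1, h2⟩ | ⟨h1, h2⟩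
        · exact hb h1
        · subst h1
          exact hne (by simp [Sym2.eq_swap]; exact fun h => (hb h))
      exact hb (reachable_eq_of_isolated this hr.symm)
    · subst hb
      have : ∀ z, ¬ ((_root_.starGraph V) \ fromEdgeSet {s(a, none)}).Adj a z := by
        rintro z ⟨hadj, hne⟩
        rcases hadj with ⟨h1, h2⟩ | ⟨h1, h2⟩
        · exact ha h1
        · subst h1
          exact hne (by simp; exact fun h => (ha h))
      exact ha (reachable_eq_of_isolated this hr)

end Aux

section Main

variable {V : Type} {τ : ℕ}

lemma gaifman_treewidthLE (𝒢 : TemporalGraph V τ) (w : ℕ)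
    (h : TreewidthLE 𝒢.expansion w) : TreewidthLE (gaifmanSigma1 𝒢) (2 * w + 1) := by
  classical
  obtain ⟨d, hd⟩ := h
  rcases Nat.eq_zero_or_pos τ with hτ | hτ
  · subst hτ
    refine ⟨⟨Option V, _root_.starGraph V, starGraph_isTree V,
      fun i => i.elim ∅ (fun v => {Sum.inl v}), ?_, ?_, ?_⟩, ?_⟩
    · rintro (v | p)
      · exact ⟨some v, by simp⟩
      · exact p.2.elim0
    · rintro (v | p) (u | q) hadj
      · simp [gaifmanSigma1, SimpleGraph.fromRel_adj] at hadj
      · exact q.2.elim0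
      · exact p.2.elim0
      · exact p.2.elim0
    · rintro (v | p)
      · rw [SimpleGraph.connected_iff]
        constructor
        · rintro ⟨a, ha⟩ ⟨b, hb⟩
          have h1 : a = some v := by cases a <;> simp_all
          have h2 : b = some v := by cases b <;> simp_all
          have : (⟨a, ha⟩ : {i // Sum.inl v ∈ Option.elim i ∅ (fun u => ({Sum.inl u} : Finset (V ⊕ V × Fin 0)))}) = ⟨b, hb⟩ :=
            Subtype.ext (h1.trans h2.symm)
          rw [this]
        · exact ⟨⟨some v, by simp⟩⟩
      · exact p.2.elim0
    · rintro (_ | v) <;> simp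
  · 
    set bagF : d.ι → Finset (V ⊕ V × Fin τ) :=
      fun i => (d.bag i).image Sum.inr ∪ (d.bag i).image (fun p => Sum.inl p.1) with hbagF
    have hmemr : ∀ (i : d.ι) (p : V × Fin τ), Sum.inr p ∈ bagF i ↔ p ∈ d.bag i := by
      intro i p; simp [hbagF]
    have hmeml : ∀ (i : d.ι) (v : V), Sum.inl v ∈ bagF i ↔ ∃ t, (v, t) ∈ d.bag i := by
      intro i v
      simp only [hbagF, Finset.mem_union, Finset.mem_image]
      constructor
      · rintro (⟨a, ha, h⟩ | ⟨⟨x, t⟩, ha, h⟩)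
        · cases h
        · injection h with h'
          subst h'
          exact ⟨t, ha⟩
      · rintro ⟨t, ht⟩
        exact Or.inr ⟨(v, t), ht, rfl⟩
    refine ⟨⟨d.ι, d.tree, d.isTree, bagF, ?_, ?_, ?_⟩, ?_⟩
    · rintro (v | p)
      · obtain ⟨i, hi⟩ := d.cover (v, (⟨0, hτ⟩ : Fin τ))
        exact ⟨i, (hmeml i v).2 ⟨(⟨0, hτ⟩ : Fin τ), hi⟩⟩
      · obtain ⟨i, hi⟩ := d.cover p
        exact ⟨i, (hmemr i p).2 hi⟩
    · rintro (v | p) (u | q) hadj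
      · simp [gaifmanSigma1, SimpleGraph.fromRel_adj] at hadj
      · have hv : v = q.1 := by
          simp only [gaifmanSigma1, SimpleGraph.fromRel_adj] at hadj
          rcases hadj.2 with h | h
          · exact h
          · exact h.elim
        obtain ⟨i, hi⟩ := d.cover q
        refine ⟨i, (hmeml i v).2 ⟨q.2, ?_⟩, (hmemr i q).2 hi⟩
        rw [hv]
        simpa using hi
      · have hv : u = p.1 := by
          simp only [gaifmanSigma1, SimpleGraph.fromRel_adj] at hadj
          rcases hadj.2 with h | h
          · exact h.elim
          · exact h
        obtain ⟨i, hi⟩ := d.cover p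
        refine ⟨i, (hmemr i p).2 hi, (hmeml i u).2 ⟨p.2, ?_⟩⟩
        rw [hv]
        simpa using hi
      · have hexp : 𝒢.expansion.Adj p q := by
          simp only [gaifmanSigma1, SimpleGraph.fromRel_adj] at hadj
          rw [TemporalGraph.expansion, SimpleGraph.fromRel_adj]
          exact ⟨fun h => hadj.1 (by rw [h]), hadj.2⟩
        obtain ⟨i, hip, hiq⟩ := d.edgeCover hexp
        exact ⟨i, (hmemr i p).2 hip, (hmemr i q).2 hiq⟩
    · rintro (v | p)
      · set B : ℕ → Set d.ι :=
          fun k => {i | ∃ t : Fin τ, (t : ℕ) ≤ k ∧ (v, t) ∈ d.bag i} with hB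
        have hBconn : ∀ k, k < τ → (d.tree.induce (B k)).Connected := by
          intro k
          induction k with
          | zero =>
            intro _
            have hBeq : B 0 = {i | (v, (⟨0, hτ⟩ : Fin τ)) ∈ d.bag i} := by
              ext i
              simp only [hB, Set.mem_setOf_eq]
              constructor
              · rintro ⟨t, ht, hmem⟩
                have : t = (⟨0, hτ⟩ : Fin τ) := Fin.ext (Nat.le_zero.mp ht)
                rwa [this] at hmem
              · intro h
                exact ⟨(⟨0, hτ⟩ : Fin τ), le_rfl, h⟩
            rw [hBeq]
            exact d.coherent (v, (⟨0, hτ⟩ : Fin τ))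
          | succ k ih =>
            intro hk
            have hk' : k < τ := Nat.lt_of_succ_lt hk
            have hBeq : B (k + 1) = B k ∪ {i | (v, ⟨k + 1, hk⟩) ∈ d.bag i} := by
              ext i
              simp only [hB, Set.mem_setOf_eq, Set.mem_union]
              constructor
              · rintro ⟨t, ht, hmem⟩
                rcases Nat.lt_or_ge (t : ℕ) (k + 1) with h | h
                · exact Or.inl ⟨t, Nat.lt_succ_iff.mp h, hmem⟩
                · have : t = ⟨k + 1, hk⟩ := Fin.ext (le_antisymm ht h)
                  exact Or.inr (this ▸ hmem)
              · rintro (⟨t, ht, hmem⟩ | h)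
                · exact ⟨t, Nat.le_succ_of_le ht, hmem⟩
                · exact ⟨⟨k + 1, hk⟩, le_rfl, h⟩
            rw [hBeq]
            have hadj : 𝒢.expansion.Adj (v, ⟨k, hk'⟩) (v, ⟨k + 1, hk⟩) := by
              rw [TemporalGraph.expansion, SimpleGraph.fromRel_adj]
              refine ⟨?_, Or.inl (Or.inr ⟨rfl, rfl⟩)⟩
              intro hcontra
              have := congrArg (fun p : V × Fin τ => (p.2 : ℕ)) hcontra
              simp at this
            obtain ⟨i, hi1, hi2⟩ := d.edgeCover hadj
            exact SimpleGraph.induce_union_connected (ih hk').preconnected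
              (d.coherent (v, ⟨k + 1, hk⟩)).preconnected ⟨i, ⟨⟨k, hk'⟩, le_rfl, hi1⟩, hi2⟩
        have hfin : {i | Sum.inl v ∈ bagF i} = B (τ - 1) := by
          ext i
          simp only [Set.mem_setOf_eq, hmeml, hB]
          constructor
          · rintro ⟨t, ht⟩
            exact ⟨t, by have := t.2; omega, ht⟩
          · rintro ⟨t, _, ht⟩
            exact ⟨t, ht⟩
        rw [hfin]
        exact hBconn (τ - 1) (by omega)
      · have hset : {i | Sum.inr p ∈ bagF i} = {i | p ∈ d.bag i} := by
          ext i
          simp [hmemr]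
        rw [hset]
        exact d.coherent p
    · intro i
      calc (bagF i).card
          ≤ ((d.bag i).image Sum.inr).card + ((d.bag i).image (fun p => Sum.inl p.1)).card := by
            rw [hbagF]; exact Finset.card_union_le _ _
        _ ≤ (d.bag i).card + (d.bag i).card :=
            Nat.add_le_add Finset.card_image_le Finset.card_image_le
        _ ≤ (w + 1) + (w + 1) := Nat.add_le_add (hd i) (hd i)
        _ = 2 * w + 1 + 1 := by ring

end Main

/-- from a tree decomposition of 𝒢_→ of width w one obtains a
tree decomposition of the σ₁-structure of width at most 2w+1; in particular
tw(S₁(𝒢)) ≤ 2·tw(𝒢_→) + 1. -/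
theorem treewidth_gaifmanSigma1_le {V : Type} {τ : ℕ} (𝒢 : TemporalGraph V τ) :
    (∀ w : ℕ, TreewidthLE 𝒢.expansion w → TreewidthLE (gaifmanSigma1 𝒢) (2 * w + 1)) ∧
    treewidth (gaifmanSigma1 𝒢) ≤ 2 * treewidth 𝒢.expansion + 1 := by
  refine ⟨fun w h => gaifman_treewidthLE 𝒢 w h, ?_⟩
  by_cases hS : ∃ n : ℕ, TreewidthLE 𝒢.expansion n
  · set T := {n : ℕ | TreewidthLE 𝒢.expansion n} with hT
    have hTne : T.Nonempty := hS
    have hm : sInf T ∈ T := Nat.sInf_mem hTne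
    have h1 : treewidth (gaifmanSigma1 𝒢) ≤ ((2 * sInf T + 1 : ℕ) : ℕ∞) :=
      sInf_le ⟨2 * sInf T + 1, gaifman_treewidthLE 𝒢 _ hm, rfl⟩
    have h2 : ((sInf T : ℕ) : ℕ∞) ≤ treewidth 𝒢.expansion := by
      apply le_sInf
      rintro x ⟨n, hn, rfl⟩
      exact_mod_cast Nat.sInf_le hn
    calc treewidth (gaifmanSigma1 𝒢) ≤ ((2 * sInf T + 1 : ℕ) : ℕ∞) := h1
      _ = 2 * ((sInf T : ℕ) : ℕ∞) + 1 := by push_cast; ring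
      _ ≤ 2 * treewidth 𝒢.expansion + 1 := add_le_add_left (mul_le_mul_right h2 2) 1
  · have hempty : {w : ℕ∞ | ∃ n : ℕ, TreewidthLE 𝒢.expansion n ∧ w = n} = ∅ := by
      ext x
      simp only [Set.mem_setOf_eq, Set.mem_empty_iff_false, iff_false]
      rintro ⟨n, hn, _⟩
      exact hS ⟨n, hn⟩
    have htop : treewidth 𝒢.expansion = ⊤ := by
      rw [treewidth, hempty, sInf_empty]
    rw [htop]
    have : (2 : ℕ∞) * ⊤ + 1 = ⊤ := by
      rw [ENat.mul_top (by norm_num)]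
      rfl
    rw [this]
    exact le_top
end

section
/- Every graph of maximum degree Δ admits a proper edge coloring with Δ + 1 colors (Vizing's theorem); in particular, every graph of maximum degree at most 4 admits a proper edge coloring with 5 colors. -/
open SimpleGraph

set_option linter.unusedSectionVars false
set_option linter.unusedVariables false
set_option maxHeartbeats 1000000

open SimpleGraph Finset

attribute [local instance] Classical.propDecidable

namespace VizingAux

variable {V : Type} [Fintype V] {n : ℕ}

def Proper (E : Finset (Sym2 V)) (c : Sym2 V → Fin n) : Prop :=
  ∀ e₁ ∈ E, ∀ e₂ ∈ E, e₁ ≠ e₂ → (∃ v, v ∈ e₁ ∧ v ∈ e₂) → c e₁ ≠ c e₂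

def Free (E : Finset (Sym2 V)) (c : Sym2 V → Fin n) (v : V) (γ : Fin n) : Prop :=
  ∀ e ∈ E, v ∈ e → c e ≠ γ

variable {G : SimpleGraph V} {E : Finset (Sym2 V)} {c : Sym2 V → Fin n}

lemma exists_free {Δ : ℕ} (hdeg : ∀ v : V, (G.neighborSet v).ncard ≤ Δ)
    (hE : E ⊆ G.edgeFinset) (c : Sym2 V → Fin (Δ + 1)) (v : V) :
    ∃ γ : Fin (Δ + 1), Free E c v γ := by
  classical
  set A : Finset (Sym2 V) := E.filter (fun e => v ∈ e) with hA
  have hinj : Set.InjOn (fun e : Sym2 V => if h : v ∈ e then Sym2.Mem.other' h else v) A := by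
    intro e₁ h₁ e₂ h₂ he
    simp only [hA, mem_coe, mem_filter] at h₁ h₂
    simp only [h₁.2, h₂.2, dif_pos] at he
    rw [← Sym2.other_spec' h₁.2, ← Sym2.other_spec' h₂.2, he]
  have hsub : A.image (fun e : Sym2 V => if h : v ∈ e then Sym2.Mem.other' h else v)
      ⊆ Set.toFinset (G.neighborSet v) := by
    intro w hw
    simp only [mem_image] at hw
    obtain ⟨e, he, rfl⟩ := hw
    simp only [hA, mem_filter] at he
    have hee : e ∈ G.edgeSet := by
      have := hE he.1; rwa [mem_edgeFinset] at this
    rw [Set.mem_toFinset]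
    simp only [he.2, dif_pos]
    have := Sym2.other_spec' he.2
    rw [← this] at hee
    exact hee
  have hcard : A.card ≤ Δ := by
    have h1 : A.card = (A.image _).card := (Finset.card_image_of_injOn hinj).symm
    have h2 := Finset.card_le_card hsub
    have h3 : (Set.toFinset (G.neighborSet v)).card = (G.neighborSet v).ncard := by
      rw [Set.ncard_eq_toFinset_card']
    have h4 := hdeg v
    omega
  by_contra hcon
  push_neg at hcon
  have hsurj : (Finset.univ : Finset (Fin (Δ + 1))) ⊆ A.image c := by
    intro γ _
    obtain ⟨e, he, hve, hce⟩ := by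
      have h := hcon γ
      unfold Free at h
      push_neg at h
      exact h
    rw [← hce]
    refine Finset.mem_image_of_mem c ?_
    rw [hA, Finset.mem_filter]
    exact ⟨he, hve⟩
  have := Finset.card_le_card hsurj
  have hle := Finset.card_image_le (s := A) (f := c)
  simp only [Finset.card_univ, Fintype.card_fin] at this
  omega


lemma ncard_edgeSet_eq {W : Type} [Fintype W] (K : SimpleGraph W) [Fintype K.edgeSet] :
    K.edgeSet.ncard = K.edgeFinset.card := by
  rw [Set.ncard_eq_toFinset_card', SimpleGraph.edgeFinset]

/-- deleting a non-bridge edge of a connected graph keeps it connected -/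
lemma conn_delete {W : Type} (J : SimpleGraph W) (hc : J.Connected) {a b : W}
    (hr : (J \ fromEdgeSet {s(a, b)}).Reachable a b) :
    (J \ fromEdgeSet {s(a, b)}).Connected := by
  have hpre : (J \ fromEdgeSet {s(a, b)}).Preconnected := by
    intro u v
    obtain ⟨p⟩ := hc.preconnected u v
    induction p with
    | nil => exact Reachable.refl _
    | cons h q ih =>
      refine Reachable.trans ?_ ih
      rename_i x y _
      by_cases he : s(x, y) = s(a, b)
      · rw [Sym2.eq_iff] at he
        rcases he with ⟨rfl, rfl⟩ | ⟨rfl, rfl⟩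
        · exact hr
        · exact hr.symm
      · exact Adj.reachable (by
          rw [SimpleGraph.sdiff_adj]
          refine ⟨h, ?_⟩
          rw [fromEdgeSet_adj]
          rintro ⟨h1, -⟩
          exact he (by simpa using h1))
  haveI := hc.nonempty
  exact ⟨hpre⟩

/-- a finite connected graph has at least (number of vertices − 1) edges -/
lemma conn_card_le {W : Type} [Fintype W] (J : SimpleGraph W) (hc : J.Connected) :
    Fintype.card W ≤ J.edgeSet.ncard + 1 := by
  classical
  generalize hm : J.edgeSet.ncard = m
  induction m using Nat.strong_induction_on generalizing J with
  | _ m ih =>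
    by_cases hac : J.IsAcyclic
    · have ht : J.IsTree := ⟨hc, hac⟩
      have h2 := ht.card_edgeFinset
      rw [ncard_edgeSet_eq] at hm
      omega
    · rw [isAcyclic_iff_forall_edge_isBridge] at hac
      push_neg at hac
      obtain ⟨e, heJ, hnb⟩ := hac
      induction e with
      | _ a b =>
      rw [isBridge_iff] at hnb
      push_neg at hnb
      have hadj : J.Adj a b := heJ
      have hr := hnb
      set J' := J \ fromEdgeSet {s(a, b)} with hJ'
      have hc' : J'.Connected := conn_delete J hc hr
      have hset : J'.edgeSet = J.edgeSet \ {s(a, b)} := by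
        rw [hJ', edgeSet_sdiff, edgeSet_fromEdgeSet]
        congr 1
        ext f
        simp only [Set.mem_diff, Set.mem_singleton_iff, Set.mem_setOf_eq, and_iff_left_iff_imp]
        rintro rfl
        simpa using hadj.ne
      have hcard' : J'.edgeSet.ncard = m - 1 := by
        rw [hset, Set.ncard_diff_singleton_of_mem heJ, hm]
      have hm1 : 1 ≤ m := by
        rw [← hm]
        have : J.edgeSet.Nonempty := ⟨s(a, b), heJ⟩
        have := Set.ncard_pos (Set.toFinite _) |>.mpr this
        omega
      have := ih (m - 1) (by omega) J' hc' hcard'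
      omega

/-- subgraph of edges colored a or b -/
def cdGraph (E : Finset (Sym2 V)) (c : Sym2 V → Fin n) (a b : Fin n) : SimpleGraph V where
  Adj u v := u ≠ v ∧ s(u, v) ∈ E ∧ (c s(u, v) = a ∨ c s(u, v) = b)
  symm := by
    refine ⟨?_⟩
    intro u v h
    obtain ⟨h1, h2, h3⟩ := h
    rw [Sym2.eq_swap] at h2 h3
    exact ⟨h1.symm, h2, h3⟩
  loopless := ⟨fun v h => h.1 rfl⟩

def swapColor (a b γ : Fin n) : Fin n :=
  if γ = a then b else if γ = b then a else γ

lemma swapColor_inj (a b : Fin n) : Function.Injective (swapColor a b) := by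
  intro γ δ h
  unfold swapColor at h
  split_ifs at h <;> omega

lemma swapColor_eq_self {a b γ : Fin n} (ha : γ ≠ a) (hb : γ ≠ b) : swapColor a b γ = γ := by
  unfold swapColor
  rw [if_neg ha, if_neg hb]

/-- swap colors a,b on the connected component of x in cdGraph -/
noncomputable def kswap (E : Finset (Sym2 V)) (c : Sym2 V → Fin n) (a b : Fin n) (x : V) :
    Sym2 V → Fin n :=
  fun e => if e ∈ E ∧ ∃ y ∈ e, (cdGraph E c a b).Reachable x y then swapColor a b (c e) else c e

variable {E : Finset (Sym2 V)} {c : Sym2 V → Fin n} {a b : Fin n} {x : V}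

/-- an edge of E colored a or b, one endpoint reachable → all endpoints reachable -/
lemma reach_all (hE : ∀ e ∈ E, ¬ e.IsDiag) {e : Sym2 V} (he : e ∈ E)
    (hab : c e = a ∨ c e = b) {y : V} (hy : y ∈ e)
    (hry : (cdGraph E c a b).Reachable x y) {z : V} (hz : z ∈ e) :
    (cdGraph E c a b).Reachable x z := by
  induction e with
  | _ u v =>
    have hne : u ≠ v := by
      intro h
      exact hE _ he (by rw [h]; exact Sym2.mk_isDiag_iff.mpr rfl)
    have hadj : (cdGraph E c a b).Adj u v :=
      show u ≠ v ∧ s(u, v) ∈ E ∧ (c s(u, v) = a ∨ c s(u, v) = b) from ⟨hne, he, hab⟩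
    rw [Sym2.mem_iff] at hy hz
    rcases hy with rfl | rfl <;> rcases hz with rfl | rfl
    · exact hry
    · exact hry.trans hadj.reachable
    · exact hry.trans hadj.symm.reachable
    · exact hry

/-- S1: the swap preserves properness -/
lemma kswap_proper (hE : ∀ e ∈ E, ¬ e.IsDiag) (hc : Proper E c) :
    Proper E (kswap E c a b x) := by
  intro e₁ h₁ e₂ h₂ hne hshare
  have hcc := hc e₁ h₁ e₂ h₂ hne hshare
  unfold kswap
  obtain ⟨v, hv₁, hv₂⟩ := hshare
  split_ifs with hr₁ hr₂ hr₂
  · exact fun h => hcc (swapColor_inj a b h)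
  · -- e₁ swapped, e₂ not
    intro h
    by_cases hab₂ : c e₂ = a ∨ c e₂ = b
    · -- e₂ is in the component through v
      obtain ⟨y, hy, hry⟩ := hr₁.2
      by_cases hab₁ : c e₁ = a ∨ c e₁ = b
      · have hrv : (cdGraph E c a b).Reachable x v := reach_all hE h₁ hab₁ hy hry hv₁
        exact hr₂ ⟨h₂, v, hv₂, hrv⟩
      · push_neg at hab₁
        rw [swapColor_eq_self hab₁.1 hab₁.2] at h
        exact hcc h
    · push_neg at hab₂
      have : c e₁ = a ∨ c e₁ = b := by
        by_contra hab₁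
        push_neg at hab₁
        rw [swapColor_eq_self hab₁.1 hab₁.2] at h
        exact hcc h
      unfold swapColor at h
      rcases this with h1 | h1
      · rw [if_pos h1] at h; exact hab₂.2 h.symm
      · by_cases hab : c e₁ = a
        · rw [if_pos hab] at h; exact hab₂.2 h.symm
        · rw [if_neg hab, if_pos h1] at h; exact hab₂.1 h.symm
  · -- e₂ swapped, e₁ not: symmetric
    intro h
    by_cases hab₁ : c e₁ = a ∨ c e₁ = b
    · obtain ⟨y, hy, hry⟩ := hr₂.2
      by_cases hab₂ : c e₂ = a ∨ c e₂ = b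
      · have hrv : (cdGraph E c a b).Reachable x v := reach_all hE h₂ hab₂ hy hry hv₂
        exact hr₁ ⟨h₁, v, hv₁, hrv⟩
      · push_neg at hab₂
        rw [swapColor_eq_self hab₂.1 hab₂.2] at h
        exact hcc h
    · push_neg at hab₁
      have : c e₂ = a ∨ c e₂ = b := by
        by_contra hab₂
        push_neg at hab₂
        rw [swapColor_eq_self hab₂.1 hab₂.2] at h
        exact hcc h
      unfold swapColor at h
      rcases this with h1 | h1
      · rw [if_pos h1] at h; exact hab₁.2 h
      · by_cases hab : c e₂ = a
        · rw [if_pos hab] at h; exact hab₁.2 h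
        · rw [if_neg hab, if_pos h1] at h; exact hab₁.1 h
  · exact hcc

/-- colors other than a,b are unchanged on every edge -/
lemma kswap_eq_of_ne {e : Sym2 V} (h1 : c e ≠ a) (h2 : c e ≠ b) :
    kswap E c a b x e = c e := by
  unfold kswap
  split_ifs with h
  · exact swapColor_eq_self h1 h2
  · rfl

/-- S2: freeness of colors other than a, b is preserved -/
lemma kswap_free_iff {v : V} {γ : Fin n} (hga : γ ≠ a) (hgb : γ ≠ b) :
    Free E (kswap E c a b x) v γ ↔ Free E c v γ := by
  have key : ∀ e ∈ E, (kswap E c a b x e = γ ↔ c e = γ) := by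
    intro e _
    unfold kswap
    split_ifs with h
    · constructor
      · intro hs
        by_contra hne
        unfold swapColor at hs
        split_ifs at hs
        · exact hgb hs.symm
        · exact hga hs.symm
        · exact hne hs
      · intro hce
        rw [hce, swapColor_eq_self hga hgb]
    · exact Iff.rfl
  constructor
  · intro hf e he hv hce
    exact hf e he hv ((key e he).mpr hce)
  · intro hf e he hv hce
    exact hf e he hv ((key e he).mp hce)

/-- S3: at an unreachable vertex nothing changes -/
lemma kswap_free_iff_of_not_reach (hE : ∀ e ∈ E, ¬ e.IsDiag) {v : V}
    (hnr : ¬ (cdGraph E c a b).Reachable x v) (γ : Fin n) :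
    Free E (kswap E c a b x) v γ ↔ Free E c v γ := by
  have key : ∀ e ∈ E, v ∈ e → kswap E c a b x e = c e := by
    intro e he hv
    unfold kswap
    split_ifs with h
    · obtain ⟨-, y, hy, hry⟩ := h
      by_cases hab : c e = a ∨ c e = b
      · exact absurd (reach_all hE he hab hy hry hv) hnr
      · push_neg at hab
        exact swapColor_eq_self hab.1 hab.2
    · rfl
  constructor
  · intro hf e he hv hce
    exact hf e he hv (by rw [key e he hv]; exact hce)
  · intro hf e he hv hce
    exact hf e he hv (by rw [key e he hv] at hce; exact hce)

/-- S4: at a reachable vertex, freeness of a and b swap -/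
lemma kswap_free_ab (hE : ∀ e ∈ E, ¬ e.IsDiag) (hab : a ≠ b) {v : V}
    (hr : (cdGraph E c a b).Reachable x v) :
    (Free E (kswap E c a b x) v b ↔ Free E c v a) ∧
    (Free E (kswap E c a b x) v a ↔ Free E c v b) := by
  have key : ∀ e ∈ E, v ∈ e →
      (kswap E c a b x e = b ↔ c e = a) ∧ (kswap E c a b x e = a ↔ c e = b) := by
    intro e he hv
    by_cases h1 : c e = a
    · have : kswap E c a b x e = b := by
        unfold kswap
        rw [if_pos ⟨he, v, hv, hr⟩]
        unfold swapColor
        rw [if_pos h1]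
      rw [this, h1]
      exact ⟨by simp, by simp [hab, hab.symm, Ne.symm hab]⟩
    · by_cases h2 : c e = b
      · have : kswap E c a b x e = a := by
          unfold kswap
          rw [if_pos ⟨he, v, hv, hr⟩]
          unfold swapColor
          rw [if_neg h1, if_pos h2]
        rw [this, h2]
        exact ⟨by simp [hab, Ne.symm hab], by simp⟩
      · rw [kswap_eq_of_ne h1 h2]
        exact ⟨by simp [h1, h2], by simp [h1, h2]⟩
  constructor
  · constructor
    · intro hf e he hv hce
      exact hf e he hv (((key e he hv).1).mpr hce)
    · intro hf e he hv hce
      exact hf e he hv (((key e he hv).1).mp hce)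
  · constructor
    · intro hf e he hv hce
      exact hf e he hv (((key e he hv).2).mpr hce)
    · intro hf e he hv hce
      exact hf e he hv (((key e he hv).2).mp hce)


/-- the component of x is "almost a path": it cannot contain two further
vertices missing color b -/
lemma factP (hE : ∀ e ∈ E, ¬ e.IsDiag) (hab : a ≠ b) (hc : Proper E c)
    {x u v : V}
    (hxa : Free E c x a)
    (hu : Free E c u b) (hv : Free E c v b)
    (hux : u ≠ x) (hvx : v ≠ x) (huv : u ≠ v)
    (hru : (cdGraph E c a b).Reachable x u) (hrv : (cdGraph E c a b).Reachable x v) :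
    False := by
  classical
  set H := cdGraph E c a b with hH
  set S : Set V := {y | H.Reachable x y} with hS
  set J := H.induce S with hJ
  have hxS : x ∈ S := Reachable.refl x
  -- J is connected
  have hSconn : J.Connected := by
    apply SimpleGraph.induce_connected_of_patches x hxS
    intro w hw
    obtain ⟨p⟩ := hw
    refine ⟨{z | z ∈ p.support}, ?_, p.start_mem_support, p.end_mem_support, ?_⟩
    · intro z hz
      exact ⟨p.takeUntil z hz⟩
    · exact (p.connected_induce_support).preconnected _ _
  -- three low-degree vertices
  have huS : u ∈ S := hru
  have hvS : v ∈ S := hrv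
  -- degree bounds
  have degle : ∀ (y : ↥S) (t : Finset (Fin n)),
      (∀ z : ↥S, J.Adj y z → c s(y.1, z.1) ∈ t) → J.degree y ≤ t.card := by
    intro y t ht
    rw [← SimpleGraph.card_neighborFinset_eq_degree]
    apply Finset.card_le_card_of_injOn (fun z => c s(y.1, z.1))
    · intro z hz
      rw [Finset.mem_coe, SimpleGraph.mem_neighborFinset] at hz
      exact ht z hz
    · intro z₁ h₁ z₂ h₂ hcc
      simp only [Finset.mem_coe, SimpleGraph.mem_neighborFinset] at h₁ h₂
      have a₁ : H.Adj y.1 z₁.1 := h₁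
      have a₂ : H.Adj y.1 z₂.1 := h₂
      have e₁ : s(y.1, z₁.1) ∈ E := (show _ ∧ _ ∧ _ from a₁).2.1
      have e₂ : s(y.1, z₂.1) ∈ E := (show _ ∧ _ ∧ _ from a₂).2.1
      by_cases heq : s(y.1, z₁.1) = s(y.1, z₂.1)
      · exact Subtype.ext (Sym2.congr_right.mp heq)
      · exact absurd hcc (hc _ e₁ _ e₂ heq ⟨y.1, Sym2.mem_mk_left _ _, Sym2.mem_mk_left _ _⟩)
  have adj_col : ∀ (y z : ↥S), J.Adj y z →
      s(y.1, z.1) ∈ E ∧ (c s(y.1, z.1) = a ∨ c s(y.1, z.1) = b) := by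
    intro y z hadj
    have h : H.Adj y.1 z.1 := hadj
    exact ⟨(show _ ∧ _ ∧ _ from h).2.1, (show _ ∧ _ ∧ _ from h).2.2⟩
  have deg2 : ∀ y : ↥S, J.degree y ≤ 2 := by
    intro y
    have := degle y {a, b} (fun z hz => by
      rcases (adj_col y z hz).2 with h | h <;> simp [h])
    calc J.degree y ≤ ({a, b} : Finset (Fin n)).card := this
    _ ≤ 2 := Finset.card_insert_le _ _ |>.trans (by simp)
  have deg1 : ∀ y : ↥S, Free E c y.1 b → J.degree y ≤ 1 := by
    intro y hf
    have := degle y {a} (fun z hz => by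
      obtain ⟨he, hcol⟩ := adj_col y z hz
      rcases hcol with h | h
      · simp [h]
      · exact absurd h (hf _ he (Sym2.mem_mk_left _ _)))
    simpa using this
  have degx : J.degree ⟨x, hxS⟩ ≤ 1 := by
    have := degle ⟨x, hxS⟩ {b} (fun z hz => by
      obtain ⟨he, hcol⟩ := adj_col _ z hz
      rcases hcol with h | h
      · exact absurd h (hxa _ he (Sym2.mem_mk_left _ _))
      · simp [h])
    simpa using this
  -- handshake
  have hand := SimpleGraph.sum_degrees_eq_twice_card_edges J
  have hcardle := conn_card_le J hSconn
  rw [ncard_edgeSet_eq] at hcardle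
  -- sum bound
  set T : Finset ↥S := {⟨x, hxS⟩, ⟨u, huS⟩, ⟨v, hvS⟩} with hT
  have hTcard : T.card = 3 := by
    rw [hT]
    rw [Finset.card_insert_of_notMem (by simp [Subtype.ext_iff, hux.symm, hvx.symm]),
        Finset.card_insert_of_notMem (by simp [Subtype.ext_iff, huv])]
    simp
  have hS3 : 3 ≤ Fintype.card ↥S := by
    have h := Finset.card_le_card (Finset.subset_univ T)
    rw [hTcard, Finset.card_univ] at h
    exact h
  have hsum : ∑ y : ↥S, J.degree y ≤ 2 * Fintype.card ↥S - 3 := by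
    have hsplit : ∑ y : ↥S, J.degree y
        = ∑ y ∈ Finset.univ \ T, J.degree y + ∑ y ∈ T, J.degree y := by
      rw [Finset.sum_sdiff (Finset.subset_univ T)]
    have h1 : ∑ y ∈ Finset.univ \ T, J.degree y ≤ 2 * (Fintype.card ↥S - 3) := by
      calc ∑ y ∈ Finset.univ \ T, J.degree y ≤ ∑ y ∈ Finset.univ \ T, 2 :=
            Finset.sum_le_sum (fun y _ => deg2 y)
      _ = (Finset.univ \ T).card * 2 := by rw [Finset.sum_const, smul_eq_mul]
      _ = 2 * (Fintype.card ↥S - 3) := by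
            rw [Finset.card_sdiff_of_subset (Finset.subset_univ T), hTcard, Finset.card_univ]
            ring
    have h2 : ∑ y ∈ T, J.degree y ≤ 3 := by
      have : ∀ y ∈ T, J.degree y ≤ 1 := by
        intro y hy
        rw [hT] at hy
        simp only [Finset.mem_insert, Finset.mem_singleton] at hy
        rcases hy with rfl | rfl | rfl
        · exact degx
        · exact deg1 _ hu
        · exact deg1 _ hv
      calc ∑ y ∈ T, J.degree y ≤ ∑ y ∈ T, 1 := Finset.sum_le_sum this
      _ = 3 := by rw [Finset.sum_const, hTcard, smul_eq_mul]
    omega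
  rw [hand] at hsum
  omega


variable {G : SimpleGraph V} {E : Finset (Sym2 V)} {c : Sym2 V → Fin n} {x : V} {d : Fin n}

/-- Rotating a fan and coloring its last edge. -/
lemma rotate (hE : E ⊆ G.edgeFinset) (hc : Proper E c) (F : ℕ → V) (w : ℕ)
    (hinj : ∀ i ≤ w, ∀ j ≤ w, F i = F j → i = j)
    (hadj : ∀ i ≤ w, G.Adj x (F i))
    (hmem : ∀ i, 1 ≤ i → i ≤ w → s(x, F i) ∈ E)
    (h0 : s(x, F 0) ∉ E)
    (hfan : ∀ i, i < w → Free E c (F i) (c s(x, F (i + 1))))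
    (hdx : Free E c x d) (hdw : Free E c (F w) d) :
    ∃ c' : Sym2 V → Fin n, Proper (insert s(x, F 0) E) c' := by
  classical
  have hFx : ∀ i ≤ w, F i ≠ x := fun i hi => (hadj i hi).ne'
  have hedge_inj : ∀ i ≤ w, ∀ j ≤ w, s(x, F i) = s(x, F j) → i = j := by
    intro i hi j hj hij
    exact hinj i hi j hj (Sym2.congr_right.mp hij)
  set c' : Sym2 V → Fin n := fun e =>
    if h : ∃ i, i ≤ w ∧ e = s(x, F i) then
      (if Nat.find h = w then d else c s(x, F (Nat.find h + 1)))
    else c e with hc'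
  have hval : ∀ i ≤ w, c' s(x, F i) = if i = w then d else c s(x, F (i + 1)) := by
    intro i hi
    have hex : ∃ j, j ≤ w ∧ s(x, F i) = s(x, F j) := ⟨i, hi, rfl⟩
    rw [hc']
    simp only [dif_pos hex]
    have hspec := Nat.find_spec hex
    have : Nat.find hex = i := hedge_inj _ hspec.1 _ hi hspec.2.symm
    rw [this]
  have hother : ∀ e, (∀ i, i ≤ w → e ≠ s(x, F i)) → c' e = c e := by
    intro e he
    rw [hc']
    refine dif_neg ?_
    rintro ⟨i, hi, rfl⟩
    exact he i hi rfl
  refine ⟨c', ?_⟩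
  -- the key asymmetric claim
  have key : ∀ e₁ ∈ insert s(x, F 0) E, ∀ e₂ ∈ insert s(x, F 0) E, e₁ ≠ e₂ →
      (∃ v, v ∈ e₁ ∧ v ∈ e₂) →
      (∃ i ≤ w, e₁ = s(x, F i)) →
      (∀ i ≤ w, e₂ ≠ s(x, F i)) → c' e₁ ≠ c' e₂ := by
    rintro e₁ h₁ e₂ h₂ hne ⟨v, hv₁, hv₂⟩ ⟨i, hi, rfl⟩ hnf
    have h₂E : e₂ ∈ E := by
      rcases Finset.mem_insert.mp h₂ with h | h
      · exact absurd h (hnf 0 (Nat.zero_le _))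
      · exact h
    rw [hval i hi, hother e₂ hnf]
    rw [Sym2.mem_iff] at hv₁
    by_cases hiw : i = w
    · rw [if_pos hiw]
      rcases hv₁ with hv₁ | hv₁
      · rw [hv₁] at hv₂
        exact fun h => hdx e₂ h₂E hv₂ h.symm
      · rw [hv₁, hiw] at hv₂
        exact fun h => hdw e₂ h₂E hv₂ h.symm
    · rw [if_neg hiw]
      have hi1 : i + 1 ≤ w := by omega
      have hmem1 : s(x, F (i + 1)) ∈ E := hmem (i + 1) (by omega) hi1
      rcases hv₁ with hv₁ | hv₁
      · -- share x
        rw [hv₁] at hv₂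
        have hne2 : s(x, F (i + 1)) ≠ e₂ := fun h => hnf (i + 1) hi1 h.symm
        exact fun h => hc _ hmem1 _ h₂E hne2 ⟨x, Sym2.mem_mk_left _ _, hv₂⟩ h
      · -- share F i
        have := hfan i (by omega)
        rw [hv₁] at hv₂
        exact fun h => this e₂ h₂E hv₂ h.symm
  intro e₁ h₁ e₂ h₂ hne hshare
  by_cases hf₁ : ∃ i ≤ w, e₁ = s(x, F i) <;> by_cases hf₂ : ∃ i ≤ w, e₂ = s(x, F i)
  · -- both fan edges
    obtain ⟨i, hi, rfl⟩ := hf₁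
    obtain ⟨j, hj, rfl⟩ := hf₂
    have hij : i ≠ j := fun h => hne (by rw [h])
    rw [hval i hi, hval j hj]
    -- symmetric in i,j: prove for i < j
    have main : ∀ i' ≤ w, ∀ j' ≤ w, i' < j' →
        (if i' = w then d else c s(x, F (i' + 1))) ≠
        (if j' = w then d else c s(x, F (j' + 1))) := by
      intro i' hi' j' hj' hlt
      have hi'w : i' ≠ w := by omega
      rw [if_neg hi'w]
      have hmi : s(x, F (i' + 1)) ∈ E := hmem (i' + 1) (by omega) (by omega)
      by_cases hj'w : j' = w
      · rw [if_pos hj'w]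
        exact fun h => hdx _ hmi (Sym2.mem_mk_left _ _) h
      · rw [if_neg hj'w]
        have hmj : s(x, F (j' + 1)) ∈ E := hmem (j' + 1) (by omega) (by omega)
        have hnee : s(x, F (i' + 1)) ≠ s(x, F (j' + 1)) := by
          intro h
          have := hedge_inj _ (by omega) _ (by omega) h
          omega
        exact hc _ hmi _ hmj hnee ⟨x, Sym2.mem_mk_left _ _, Sym2.mem_mk_left _ _⟩
    rcases Nat.lt_or_ge i j with h | h
    · exact main i hi j hj h
    · have : j < i := by omega
      exact (main j hj i hi this).symm
  · push_neg at hf₂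
    exact key e₁ h₁ e₂ h₂ hne hshare hf₁ hf₂
  · push_neg at hf₁
    obtain ⟨v, hv₁, hv₂⟩ := hshare
    exact (key e₂ h₂ e₁ h₁ hne.symm ⟨v, hv₂, hv₁⟩ hf₂ hf₁).symm
  · push_neg at hf₁ hf₂
    rw [hother e₁ hf₁, hother e₂ hf₂]
    have h₁E : e₁ ∈ E := by
      rcases Finset.mem_insert.mp h₁ with h | h
      · exact absurd h (hf₁ 0 (Nat.zero_le _))
      · exact h
    have h₂E : e₂ ∈ E := by
      rcases Finset.mem_insert.mp h₂ with h | h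
      · exact absurd h (hf₂ 0 (Nat.zero_le _))
      · exact h
    exact hc _ h₁E _ h₂E hne hshare


def IsFan (G : SimpleGraph V) (E : Finset (Sym2 V)) (c : Sym2 V → Fin n)
    (x y : V) (F : ℕ → V) (k : ℕ) : Prop :=
  (∀ i ≤ k, ∀ j ≤ k, F i = F j → i = j) ∧
  (∀ i ≤ k, G.Adj x (F i)) ∧
  F 0 = y ∧
  (∀ i, 1 ≤ i → i ≤ k → s(x, F i) ∈ E) ∧
  (∀ i < k, Free E c (F i) (c s(x, F (i + 1))))

variable {G : SimpleGraph V} {E : Finset (Sym2 V)} {c : Sym2 V → Fin n} {x y : V}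

lemma exists_max_fan (hxy : G.Adj x y) :
    ∃ k F, IsFan G E c x y F k ∧ ∀ k' F', IsFan G E c x y F' k' → k' ≤ k := by
  classical
  set P : ℕ → Prop := fun k => ∃ F, IsFan G E c x y F k with hP
  have hbound : ∀ k, P k → k < Fintype.card V := by
    rintro k ⟨F, hF⟩
    have hinj : Function.Injective (fun i : Fin (k + 1) => F i.1) := by
      intro i j hij
      exact Fin.ext (hF.1 i.1 (by omega) j.1 (by omega) hij)
    have := Fintype.card_le_of_injective _ hinj
    simp only [Fintype.card_fin] at this
    omega
  have hP0 : P 0 := by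
    refine ⟨fun _ => y, ?_, ?_, rfl, ?_, ?_⟩
    · intro i hi j hj _; omega
    · intro i _; exact hxy
    · intro i h1 h2; omega
    · intro i h; omega
  set k := Nat.findGreatest P (Fintype.card V) with hk
  have hPk : P k := Nat.findGreatest_spec (Nat.zero_le _) hP0
  obtain ⟨F, hF⟩ := hPk
  refine ⟨k, F, hF, ?_⟩
  intro k' F' hF'
  exact Nat.le_findGreatest (le_of_lt (hbound k' ⟨F', hF'⟩)) ⟨F', hF'⟩


section Extend

variable {Δ : ℕ}

lemma extend (hdeg : ∀ v : V, (G.neighborSet v).ncard ≤ Δ)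
    {E : Finset (Sym2 V)} {c : Sym2 V → Fin (Δ + 1)}
    (hE : E ⊆ G.edgeFinset) (hc : Proper E c)
    (hxy : G.Adj x y) (hne : s(x, y) ∉ E) :
    ∃ c' : Sym2 V → Fin (Δ + 1), Proper (insert s(x, y) E) c' := by
  classical
  have hEd : ∀ e ∈ E, ¬ e.IsDiag := by
    intro e he
    exact SimpleGraph.not_isDiag_of_mem_edgeSet G (mem_edgeFinset.mp (hE he))
  obtain ⟨k, F, hF, hmax⟩ := exists_max_fan (E := E) (c := c) hxy
  obtain ⟨hFinj, hFadj, hF0, hFmem, hFfan⟩ := hF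
  have hF0E : s(x, F 0) ∉ E := by rw [hF0]; exact hne
  obtain ⟨a, ha⟩ := exists_free hdeg hE c x
  obtain ⟨d, hdk⟩ := exists_free hdeg hE c (F k)
  by_cases hdfree : Free E c x d
  · obtain ⟨c', hc'⟩ := rotate hE hc F k hFinj hFadj hFmem hF0E hFfan hdfree hdk
    rw [hF0] at hc'
    exact ⟨c', hc'⟩
  · -- x has an edge colored d
    have hex : ∃ e ∈ E, x ∈ e ∧ c e = d := by
      unfold Free at hdfree
      push_neg at hdfree
      exact hdfree
    obtain ⟨e, heE, hxe, hed⟩ := hex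
    set z := Sym2.Mem.other' hxe with hz
    have hspec : s(x, z) = e := Sym2.other_spec' hxe
    have hzadj : G.Adj x z := by
      have h2 : e ∈ G.edgeSet := mem_edgeFinset.mp (hE heE)
      rw [← hspec] at h2
      exact h2
    have hzE : s(x, z) ∈ E := by rw [hspec]; exact heE
    have hzd : c s(x, z) = d := by rw [hspec]; exact hed
    -- z is in the fan (else the fan could be extended)
    have hzfan : ∃ j, 1 ≤ j ∧ j ≤ k ∧ F j = z := by
      by_contra hno
      push_neg at hno
      have hznotin : ∀ i ≤ k, F i ≠ z := by
        intro i hi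
        rcases Nat.eq_zero_or_pos i with rfl | hipos
        · rw [hF0]
          intro hyz
          rw [← hyz] at hzE
          exact hne hzE
        · exact hno i hipos hi
      set F' : ℕ → V := fun i => if i = k + 1 then z else F i with hF'
      have hFfan' : IsFan G E c x y F' (k + 1) := by
        refine ⟨?_, ?_, ?_, ?_, ?_⟩
        · intro i hi j hj hij
          rw [hF'] at hij
          simp only at hij
          by_cases hik : i = k + 1 <;> by_cases hjk : j = k + 1
          · omega
          · rw [if_pos hik, if_neg hjk] at hij
            exact absurd hij.symm (hznotin j (by omega))
          · rw [if_neg hik, if_pos hjk] at hij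
            exact absurd hij (hznotin i (by omega))
          · rw [if_neg hik, if_neg hjk] at hij
            exact hFinj i (by omega) j (by omega) hij
        · intro i hi
          rw [hF']
          simp only
          by_cases hik : i = k + 1
          · rw [if_pos hik]; exact hzadj
          · rw [if_neg hik]; exact hFadj i (by omega)
        · rw [hF']; simp only [if_neg (by omega : ¬ (0 = k + 1))]; exact hF0
        · intro i h1 h2
          rw [hF']
          simp only
          by_cases hik : i = k + 1
          · rw [if_pos hik]; exact hzE
          · rw [if_neg hik]; exact hFmem i h1 (by omega)
        · intro i hi
          rw [hF']
          simp only
          by_cases hik : i + 1 = k + 1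
          · rw [if_pos hik, if_neg (by omega : ¬ (i = k + 1))]
            have hik' : i = k := by omega
            rw [hik', hzd]
            exact hdk
          · rw [if_neg hik, if_neg (by omega : ¬ (i = k + 1))]
            exact hFfan i (by omega)
      have := hmax (k + 1) F' hFfan'
      omega
    obtain ⟨j, hj1, hjk, hFj⟩ := hzfan
    have hfanjd : c s(x, F j) = d := by rw [hFj]; exact hzd
    have had : a ≠ d := by
      intro h
      exact ha _ hzE (Sym2.mem_mk_left x z) (by rw [hzd, h])
    -- j ≠ k since d is free at F k
    have hjltk : j < k := by
      rcases Nat.lt_or_ge j k with h | h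
      · exact h
      · exfalso
        have hjk' : j = k := by omega
        rw [hjk'] at hfanjd
        exact hdk _ (hFmem k (by omega) le_rfl) (Sym2.mem_mk_right x (F k)) hfanjd
    have hdj1 : Free E c (F (j - 1)) d := by
      have := hFfan (j - 1) (by omega)
      rw [show j - 1 + 1 = j by omega, hfanjd] at this
      exact this
    -- the Kempe swap
    set H := cdGraph E c a d with hH
    set c₁ := kswap E c a d x with hc₁def
    have hc₁ : Proper E c₁ := kswap_proper hEd hc
    have hdx₁ : Free E c₁ x d :=
      ((kswap_free_ab hEd had (Reachable.refl x)).1).mpr ha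
    -- colors of non-j fan edges are not a or d
    have hcol : ∀ i, 1 ≤ i → i ≤ k → i ≠ j → c s(x, F i) ≠ a ∧ c s(x, F i) ≠ d := by
      intro i h1 h2 hij
      constructor
      · exact ha _ (hFmem i h1 h2) (Sym2.mem_mk_left _ _)
      · intro hd
        have hnee : s(x, F i) ≠ s(x, F j) := by
          intro h
          exact hij (hFinj i h2 j hjk (Sym2.congr_right.mp h))
        exact hc _ (hFmem i h1 h2) _ (hFmem j hj1 hjk) hnee
          ⟨x, Sym2.mem_mk_left _ _, Sym2.mem_mk_left _ _⟩ (by rw [hd, hfanjd])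
    have hcol_eq : ∀ i, 1 ≤ i → i ≤ k → i ≠ j → c₁ s(x, F i) = c s(x, F i) := by
      intro i h1 h2 hij
      exact kswap_eq_of_ne (hcol i h1 h2 hij).1 (hcol i h1 h2 hij).2
    by_cases hB : Free E c₁ (F (j - 1)) d
    · -- case A : rotate the fan up to j - 1
      have hfan' : ∀ i, i < j - 1 → Free E c₁ (F i) (c₁ s(x, F (i + 1))) := by
        intro i hi
        have h1 : 1 ≤ i + 1 := by omega
        have h2 : i + 1 ≤ k := by omega
        have hij : i + 1 ≠ j := by omega
        rw [hcol_eq (i + 1) h1 h2 hij]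
        rw [kswap_free_iff (hcol (i + 1) h1 h2 hij).1 (hcol (i + 1) h1 h2 hij).2]
        exact hFfan i (by omega)
      obtain ⟨c', hc'⟩ := rotate hE hc₁ F (j - 1)
        (fun i hi j' hj' => hFinj i (by omega) j' (by omega))
        (fun i hi => hFadj i (by omega))
        (fun i h1 h2 => hFmem i h1 (by omega))
        hF0E hfan' hdx₁ hB
      rw [hF0] at hc'
      exact ⟨c', hc'⟩
    · -- case B : rotate the whole fan
      have hreachj1 : H.Reachable x (F (j - 1)) := by
        by_contra hnr
        rw [kswap_free_iff_of_not_reach hEd hnr d] at hB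
        exact hB hdj1
      have hafree : Free E c₁ (F (j - 1)) a :=
        ((kswap_free_ab hEd had hreachj1).2).mpr hdj1
      have hnreachk : ¬ H.Reachable x (F k) := by
        intro hr
        exact factP hEd had hc ha hdj1 hdk
          (hFadj (j - 1) (by omega)).ne' (hFadj k le_rfl).ne'
          (fun h => by
            have := hFinj (j - 1) (by omega) k le_rfl h
            omega)
          hreachj1 hr
      have hdk₁ : Free E c₁ (F k) d :=
        (kswap_free_iff_of_not_reach hEd hnreachk d).mpr hdk
      -- the color of the j-th fan edge after the swap is a
      have hcja : c₁ s(x, F j) = a := by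
        rw [hc₁def]
        unfold kswap
        rw [if_pos ⟨hFmem j hj1 hjk, x, Sym2.mem_mk_left _ _, Reachable.refl x⟩]
        unfold swapColor
        rw [hfanjd, if_neg (Ne.symm had), if_pos rfl]
      have hfan' : ∀ i, i < k → Free E c₁ (F i) (c₁ s(x, F (i + 1))) := by
        intro i hi
        by_cases hij : i + 1 = j
        · rw [hij, hcja]
          have : i = j - 1 := by omega
          rw [this]
          exact hafree
        · have h1 : 1 ≤ i + 1 := by omega
          have h2 : i + 1 ≤ k := by omega
          rw [hcol_eq (i + 1) h1 h2 hij]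
          rw [kswap_free_iff (hcol (i + 1) h1 h2 hij).1 (hcol (i + 1) h1 h2 hij).2]
          exact hFfan i hi
      obtain ⟨c', hc'⟩ := rotate hE hc₁ F k hFinj hFadj hFmem hF0E hfan' hdx₁ hdk₁
      rw [hF0] at hc'
      exact ⟨c', hc'⟩

end Extend

lemma vizing_aux {Δ : ℕ} (G : SimpleGraph V) (hdeg : ∀ v : V, (G.neighborSet v).ncard ≤ Δ) :
    ∀ m (E : Finset (Sym2 V)), E ⊆ G.edgeFinset → E.card = m →
      ∃ c : Sym2 V → Fin (Δ + 1), Proper E c := by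
  classical
  intro m
  induction m with
  | zero =>
    intro E hE hcard
    rw [Finset.card_eq_zero] at hcard
    subst hcard
    exact ⟨fun _ => ⟨0, by omega⟩, fun e₁ h₁ => absurd h₁ (Finset.notMem_empty _)⟩
  | succ m ih =>
    intro E hE hcard
    have hne : E.Nonempty := Finset.card_pos.mp (by omega)
    obtain ⟨e, he⟩ := hne
    have heG : e ∈ G.edgeSet := mem_edgeFinset.mp (hE he)
    induction e with
    | _ u v =>
    have hadj : G.Adj u v := heG
    have hE' : E.erase s(u, v) ⊆ G.edgeFinset := (Finset.erase_subset _ _).trans hE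
    have hcard' : (E.erase s(u, v)).card = m := by
      rw [Finset.card_erase_of_mem he]
      omega
    obtain ⟨c, hc⟩ := ih (E.erase s(u, v)) hE' hcard'
    obtain ⟨c', hc'⟩ := extend hdeg hE' hc hadj (Finset.notMem_erase _ _)
    rw [Finset.insert_erase he] at hc'
    exact ⟨c', hc'⟩

end VizingAux

/-- Vizing's theorem: every graph of maximum degree at most Δ
admits a proper edge coloring with Δ + 1 colors; in particular every graph of
maximum degree at most 4 admits a proper edge coloring with 5 colors. -/
theorem vizing {V : Type} [Fintype V] (G : SimpleGraph V) (Δ : ℕ)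
    (hdeg : ∀ v : V, (G.neighborSet v).ncard ≤ Δ) :
    ∃ c : Sym2 V → Fin (Δ + 1),
      ∀ e₁ ∈ G.edgeSet, ∀ e₂ ∈ G.edgeSet, e₁ ≠ e₂ →
        (∃ v, v ∈ e₁ ∧ v ∈ e₂) → c e₁ ≠ c e₂ := by
  classical
  obtain ⟨c, hc⟩ := VizingAux.vizing_aux G hdeg G.edgeFinset.card G.edgeFinset (subset_refl _) rfl
  exact ⟨c, fun e₁ h₁ e₂ h₂ hne hsh =>
    hc e₁ (SimpleGraph.mem_edgeFinset.mpr h₁) e₂ (SimpleGraph.mem_edgeFinset.mpr h₂) hne hsh⟩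
end

section
/- Let 𝒢 be a temporal graph, Δ ≥ 1, a = (v, t_a) a time vertex, and r ≥ 1. Then the Gaifman graph of the substructure of the σ-structure S(𝒢) (signature {adj, succ}) induced by the r-neighbourhood N_r(a) (computed in the σ_Δ Gaifman graph) is an induced subgraph of the differential 𝒢_→^{t_a − rΔ, 2rΔ+1}, and consequently its tree-width is at most the (2rΔ+1)-differential tree-width of 𝒢: tw(S(𝒢)[N_r(a)]) ≤ dtw_{2rΔ+1}(𝒢). -/
open SimpleGraph

/-- The Gaifman graph of the σ_Δ-structure of a temporal graph, on V × Fin τ. -/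
def gaifmanDelta {V : Type} {τ : ℕ} (𝒢 : TemporalGraph V τ) (Δ : ℕ) :
    SimpleGraph (V × Fin τ) :=
  SimpleGraph.fromRel (fun a b =>
    (a.2 = b.2 ∧ (𝒢.snapshot a.2).Adj a.1 b.1) ∨
    (a.1 = b.1 ∧ (a.2 : ℕ) < (b.2 : ℕ) ∧ (b.2 : ℕ) ≤ (a.2 : ℕ) + Δ))

/-- The r-neighbourhood of a in G: vertices reachable by a walk of length ≤ r. -/
def ball {α : Type} (G : SimpleGraph α) (a : α) (r : ℕ) : Set α :=
  {b | ∃ w : G.Walk a b, w.length ≤ r}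

/-- The differential of 𝒢 at t over a window of Δ snapshots: the static
expansion graph of the snapshots G_t, …, G_{t+Δ−1}. -/
def TemporalGraph.differential {V : Type} {τ : ℕ} (𝒢 : TemporalGraph V τ)
    (t Δ : ℕ) (h : t + Δ ≤ τ) : SimpleGraph (V × Fin Δ) :=
  TemporalGraph.expansion ⟨fun s => 𝒢.snapshot ⟨t + (s : ℕ), by omega⟩⟩

/-- dtw_Δ(𝒢) ≤ w : every differential over windows of size Δ has a tree
decomposition of width at most w. -/
def DtwLE {V : Type} {τ : ℕ} (𝒢 : TemporalGraph V τ) (Δ w : ℕ) : Prop :=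
  ∀ (t : ℕ) (h : t + Δ ≤ τ), TreewidthLE (𝒢.differential t Δ h) w


lemma tw_le_of_embedding {α β : Type} {G : SimpleGraph α} {H : SimpleGraph β}
    (f : G ↪g H) {w : ℕ} (hH : TreewidthLE H w) : TreewidthLE G w := by
  obtain ⟨d, hd⟩ := hH
  let B : d.ι → Finset α := fun i => (d.bag i).preimage f f.injective.injOn
  have hB : ∀ (i : d.ι) (x : α), x ∈ B i ↔ f x ∈ d.bag i := fun i x => Finset.mem_preimage
  refine ⟨⟨d.ι, d.tree, d.isTree, B, ?_, ?_, ?_⟩, ?_⟩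
  · intro u
    obtain ⟨i, hi⟩ := d.cover (f u)
    exact ⟨i, (hB i u).2 hi⟩
  · intro u u' h
    obtain ⟨i, hi, hi'⟩ := d.edgeCover (f.map_rel_iff.2 h)
    exact ⟨i, (hB i u).2 hi, (hB i u').2 hi'⟩
  · intro u
    have : {i | u ∈ B i} = {i | f u ∈ d.bag i} := by
      ext i; exact hB i u
    rw [this]
    exact d.coherent (f u)
  · intro i
    exact le_trans (Finset.card_le_card_of_injOn f
      (fun x hx => (hB i x).1 hx) f.injective.injOn) (hd i)

lemma gaifman_time_bound {V : Type} {τ : ℕ} (𝒢 : TemporalGraph V τ) (Δ : ℕ)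
    {a b : V × Fin τ} (h : (gaifmanDelta 𝒢 Δ).Adj a b) :
    (b.2 : ℕ) ≤ (a.2 : ℕ) + Δ ∧ (a.2 : ℕ) ≤ (b.2 : ℕ) + Δ := by
  rw [gaifmanDelta, SimpleGraph.fromRel_adj] at h
  rcases h.2 with (⟨he, -⟩ | ⟨-, h1, h2⟩) | (⟨he, -⟩ | ⟨-, h1, h2⟩) <;> omega

lemma walk_time_bound {V : Type} {τ : ℕ} (𝒢 : TemporalGraph V τ) (Δ : ℕ)
    {a b : V × Fin τ} (w : (gaifmanDelta 𝒢 Δ).Walk a b) :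
    (b.2 : ℕ) ≤ (a.2 : ℕ) + w.length * Δ ∧ (a.2 : ℕ) ≤ (b.2 : ℕ) + w.length * Δ := by
  induction w with
  | nil => simp
  | cons h p ih =>
    have := gaifman_time_bound 𝒢 Δ h
    simp only [SimpleGraph.Walk.length_cons]
    constructor <;> nlinarith [ih.1, ih.2]

lemma ball_time_bound {V : Type} {τ : ℕ} (𝒢 : TemporalGraph V τ) (Δ : ℕ)
    {a b : V × Fin τ} {r : ℕ} (hb : b ∈ _root_.ball (gaifmanDelta 𝒢 Δ) a r) :
    (b.2 : ℕ) ≤ (a.2 : ℕ) + r * Δ ∧ (a.2 : ℕ) ≤ (b.2 : ℕ) + r * Δ := by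
  obtain ⟨w, hw⟩ := hb
  have := walk_time_bound 𝒢 Δ w
  constructor <;> nlinarith [this.1, this.2]

/-- the Gaifman graph of the substructure of S(𝒢) induced by the
r-neighbourhood N_r(a) (taken in the σ_Δ Gaifman graph) is an induced subgraph
of the differential of 𝒢 at t_a − rΔ over window 2rΔ + 1; consequently its
tree-width is at most the (2rΔ+1)-differential tree-width of 𝒢. -/
theorem local_substructure_treewidth {V : Type} {τ : ℕ} (𝒢 : TemporalGraph V τ)
    (Δ : ℕ) (hΔ : 1 ≤ Δ) (v : V) (ta : Fin τ) (r : ℕ) (hr : 1 ≤ r)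
    (hlow : r * Δ ≤ (ta : ℕ)) (hhigh : (ta : ℕ) + r * Δ + 1 ≤ τ) :
    Nonempty ((𝒢.expansion.induce (_root_.ball (gaifmanDelta 𝒢 Δ) (v, ta) r)) ↪g
      (𝒢.differential ((ta : ℕ) - r * Δ) (2 * (r * Δ) + 1) (by omega))) ∧
    (∀ w : ℕ, DtwLE 𝒢 (2 * (r * Δ) + 1) w →
      TreewidthLE (𝒢.expansion.induce (_root_.ball (gaifmanDelta 𝒢 Δ) (v, ta) r)) w) := by
  set L := (ta : ℕ) - r * Δ with hL
  set W := 2 * (r * Δ) + 1 with hW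
  have hbound : ∀ b ∈ _root_.ball (gaifmanDelta 𝒢 Δ) (v, ta) r,
      L ≤ (b.2 : ℕ) ∧ (b.2 : ℕ) < L + W := by
    intro b hb
    have := ball_time_bound 𝒢 Δ hb
    simp only at this
    omega
  have key : (𝒢.expansion.induce (_root_.ball (gaifmanDelta 𝒢 Δ) (v, ta) r)) ↪g
      (𝒢.differential L W (by omega)) := by
    classical
    set S := _root_.ball (gaifmanDelta 𝒢 Δ) (v, ta) r with hS
    let g : S → V × Fin W := fun x => (x.1.1, ⟨(x.1.2 : ℕ) - L, by
      have := hbound x.1 x.2; omega⟩)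
    have hinj : Function.Injective g := by
      rintro ⟨⟨xu, xt⟩, hxm⟩ ⟨⟨yu, yt⟩, hym⟩ hxy
      have hx : L <= (xt : Nat) /\ (xt : Nat) < L + W := hbound (xu, xt) hxm
      have hy : L <= (yt : Nat) /\ (yt : Nat) < L + W := hbound (yu, yt) hym
      have h1 : xu = yu := congrArg Prod.fst hxy
      have h2 : (xt : ℕ) - L = (yt : ℕ) - L := by
        have h3 := congrArg (fun p : V × Fin W => ((p.2 : Fin W) : ℕ)) hxy
        simpa [g] using h3
      exact Subtype.ext (Prod.ext h1 (Fin.ext (by show (xt : Nat) = (yt : Nat); omega)))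
    refine ⟨⟨g, hinj⟩, ?_⟩
    rintro ⟨⟨xu, xt⟩, hxm⟩ ⟨⟨yu, yt⟩, hym⟩
    have hx : L <= (xt : Nat) /\ (xt : Nat) < L + W := hbound (xu, xt) hxm
    have hy : L <= (yt : Nat) /\ (yt : Nat) < L + W := hbound (yu, yt) hym
    have e1 : ((𝒢.expansion.induce S).Adj ⟨(xu, xt), hxm⟩ ⟨(yu, yt), hym⟩) ↔
        𝒢.expansion.Adj (xu, xt) (yu, yt) := Iff.rfl
    rw [e1]
    simp only [TemporalGraph.differential, TemporalGraph.expansion,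
      SimpleGraph.fromRel_adj, Function.Embedding.coeFn_mk, g, Prod.mk.injEq,
      Fin.mk.injEq, ne_eq, not_and]
    have htx : (⟨L + ((xt : ℕ) - L), by omega⟩ : Fin τ) = xt := Fin.ext (by simp; omega)
    have hty : (⟨L + ((yt : ℕ) - L), by omega⟩ : Fin τ) = yt := Fin.ext (by simp; omega)
    rw [htx, hty]
    
    constructor
    · rintro ⟨hne, h⟩
      refine ⟨fun h1 h2 => hne h1 (by have h3 := congrArg Fin.val h2; omega), ?_⟩
      rcases h with (⟨he, ha⟩ | ⟨he, ha⟩) | (⟨he, ha⟩ | ⟨he, ha⟩)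
      · have h2 : xt = yt := Fin.ext (by omega)
        exact Or.inl (Or.inl ⟨h2, ha⟩)
      · exact Or.inl (Or.inr ⟨he, by omega⟩)
      · have h2 : yt = xt := Fin.ext (by omega)
        exact Or.inr (Or.inl ⟨h2, ha⟩)
      · exact Or.inr (Or.inr ⟨he, by omega⟩)
    · rintro ⟨hne, h⟩
      refine ⟨fun h1 h2 => hne h1 (Fin.ext (by omega)), ?_⟩
      rcases h with (⟨he, ha⟩ | ⟨he, ha⟩) | (⟨he, ha⟩ | ⟨he, ha⟩)
      · have hv : (xt : ℕ) = (yt : ℕ) := by rw [he]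
        exact Or.inl (Or.inl ⟨by omega, ha⟩)
      · exact Or.inl (Or.inr ⟨he, by omega⟩)
      · have hv : (yt : ℕ) = (xt : ℕ) := by rw [he]
        exact Or.inr (Or.inl ⟨by omega, ha⟩)
      · exact Or.inr (Or.inr ⟨he, by omega⟩)
  exact ⟨⟨key⟩, fun w hw => tw_le_of_embedding key (hw L (by omega))⟩
end

section
/- Let 𝒢 be a temporal graph. Then the twin-width of the {adj, succ}-structure S(𝒢) (as a trigraph/binary structure, where contractions must preserve each relation separately) satisfies tww(𝒢_→) ≤ tww(S(𝒢)) ≤ tww(𝒢_→) + 2; moreover, any d-contraction sequence of 𝒢_→ is a (d+2)-contraction sequence of S(𝒢). -/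
open SimpleGraph

/-- Homogeneity of a pair of sets with respect to two relations: fully related
by the first, fully related by the second, or fully unrelated. -/
def homogPair {α : Type} (G₁ G₂ : SimpleGraph α) (X Y : Set α) : Prop :=
  (∀ x ∈ X, ∀ y ∈ Y, G₁.Adj x y) ∨ (∀ x ∈ X, ∀ y ∈ Y, G₂.Adj x y) ∨
  (∀ x ∈ X, ∀ y ∈ Y, ¬ G₁.Adj x y ∧ ¬ G₂.Adj x y)

/-- Twin-width of the two-relation structure (G₁, G₂). -/
noncomputable def twinwidthPair {α : Type} (G₁ G₂ : SimpleGraph α) : ℕ∞ :=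
  sInf {w : ℕ∞ | ∃ d : ℕ,
    (∃ c : ContractionSeq α, c.RedDegLE (homogPair G₁ G₂) d) ∧ w = d}

/-- The local (adj) edges of the static expansion, as a graph. -/
def adjGraph {V : Type} {τ : ℕ} (𝒢 : TemporalGraph V τ) :
    SimpleGraph (V × Fin τ) :=
  SimpleGraph.fromRel (fun a b => a.2 = b.2 ∧ (𝒢.snapshot a.2).Adj a.1 b.1)

/-- The temporal (succ) edges of the static expansion, as a graph. -/
def succGraph {V : Type} {τ : ℕ} (𝒢 : TemporalGraph V τ) :
    SimpleGraph (V × Fin τ) :=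
  SimpleGraph.fromRel (fun a b => a.1 = b.1 ∧ (a.2 : ℕ) + 1 = (b.2 : ℕ))

section Aux

variable {V : Type} {τ : ℕ}

lemma expansion_adj_iff (𝒢 : TemporalGraph V τ) (a b : V × Fin τ) :
    𝒢.expansion.Adj a b ↔ (adjGraph 𝒢).Adj a b ∨ (succGraph 𝒢).Adj a b := by
  simp only [TemporalGraph.expansion, adjGraph, succGraph, SimpleGraph.fromRel_adj]
  tauto

lemma succ_adj_facts {𝒢 : TemporalGraph V τ} {a b : V × Fin τ}
    (h : (succGraph 𝒢).Adj a b) :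
    a.1 = b.1 ∧ ((a.2 : ℕ) + 1 = (b.2 : ℕ) ∨ (b.2 : ℕ) + 1 = (a.2 : ℕ)) := by
  rw [succGraph, SimpleGraph.fromRel_adj] at h
  rcases h.2 with ⟨h1, h2⟩ | ⟨h1, h2⟩
  · exact ⟨h1, Or.inl h2⟩
  · exact ⟨h1.symm, Or.inr h2⟩

lemma exp_adj_time {𝒢 : TemporalGraph V τ} {a b : V × Fin τ}
    (h : 𝒢.expansion.Adj a b) :
    (a.2 : ℕ) ≤ (b.2 : ℕ) + 1 ∧ (b.2 : ℕ) ≤ (a.2 : ℕ) + 1 := by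
  rw [TemporalGraph.expansion, SimpleGraph.fromRel_adj] at h
  rcases h.2 with (⟨h1, _⟩ | ⟨_, h1⟩) | (⟨h1, _⟩ | ⟨_, h1⟩) <;>
    first
      | (have := congrArg Fin.val h1; omega)
      | omega

lemma exp_adj_vertex {𝒢 : TemporalGraph V τ} {a b : V × Fin τ}
    (h : 𝒢.expansion.Adj a b) (hne : (a.2 : ℕ) ≠ (b.2 : ℕ)) : a.1 = b.1 := by
  rw [TemporalGraph.expansion, SimpleGraph.fromRel_adj] at h
  rcases h.2 with (⟨h1, _⟩ | ⟨h1, _⟩) | (⟨h1, _⟩ | ⟨h1, _⟩)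
  · exact absurd (congrArg Fin.val h1) hne
  · exact h1
  · exact absurd (congrArg Fin.val h1.symm) hne
  · exact h1.symm

/-- A "good" point for a set `X`: succ-adjacent to some point of `X` and
expansion-adjacent to every point of `X`. -/
def GoodPt (𝒢 : TemporalGraph V τ) (X : Set (V × Fin τ)) (b : V × Fin τ) : Prop :=
  (∃ a ∈ X, (succGraph 𝒢).Adj a b) ∧ ∀ a ∈ X, 𝒢.expansion.Adj a b

lemma goodPt_ordered {𝒢 : TemporalGraph V τ} {X : Set (V × Fin τ)}
    {b₁ b₂ b₃ : V × Fin τ} (h₁ : GoodPt 𝒢 X b₁) (h₂ : GoodPt 𝒢 X b₂)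
    (h₃ : GoodPt 𝒢 X b₃) (l12 : (b₁.2 : ℕ) < (b₂.2 : ℕ))
    (l23 : (b₂.2 : ℕ) < (b₃.2 : ℕ)) : False := by
  obtain ⟨a₁, ha₁, hs₁⟩ := h₁.1
  obtain ⟨a₂, ha₂, hs₂⟩ := h₂.1
  have e₁ := (succ_adj_facts hs₁).2
  have e₂ := (succ_adj_facts hs₂).2
  have t13 := exp_adj_time (h₃.2 a₁ ha₁)
  have t21 := exp_adj_time (h₁.2 a₂ ha₂)
  have t23 := exp_adj_time (h₃.2 a₂ ha₂)
  omega

lemma goodPt_same_time {𝒢 : TemporalGraph V τ} {X : Set (V × Fin τ)}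
    {b b' : V × Fin τ} (h : GoodPt 𝒢 X b) (h' : GoodPt 𝒢 X b')
    (ht : b.2 = b'.2) : b = b' := by
  obtain ⟨a, ha, hs⟩ := h.1
  obtain ⟨hv, he⟩ := succ_adj_facts hs
  have ht' : (b.2 : ℕ) = (b'.2 : ℕ) := congrArg Fin.val ht
  have hadj := h'.2 a ha
  have hv' : a.1 = b'.1 := exp_adj_vertex hadj (by omega)
  exact Prod.ext (hv ▸ hv') ht

lemma goodPt_three {𝒢 : TemporalGraph V τ} {X : Set (V × Fin τ)}
    {b₁ b₂ b₃ : V × Fin τ} (h₁ : GoodPt 𝒢 X b₁) (h₂ : GoodPt 𝒢 X b₂)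
    (h₃ : GoodPt 𝒢 X b₃) (n12 : b₁ ≠ b₂) (n13 : b₁ ≠ b₃) (n23 : b₂ ≠ b₃) :
    False := by
  have d12 : (b₁.2 : ℕ) ≠ (b₂.2 : ℕ) := fun h =>
    n12 (goodPt_same_time h₁ h₂ (Fin.ext h))
  have d13 : (b₁.2 : ℕ) ≠ (b₃.2 : ℕ) := fun h =>
    n13 (goodPt_same_time h₁ h₃ (Fin.ext h))
  have d23 : (b₂.2 : ℕ) ≠ (b₃.2 : ℕ) := fun h =>
    n23 (goodPt_same_time h₂ h₃ (Fin.ext h))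
  rcases lt_or_gt_of_ne d12 with l12 | l21 <;>
    rcases lt_or_gt_of_ne d13 with l13 | l31 <;>
      rcases lt_or_gt_of_ne d23 with l23 | l32
  · exact goodPt_ordered h₁ h₂ h₃ l12 l23
  · exact goodPt_ordered h₁ h₃ h₂ l13 l32
  · omega
  · exact goodPt_ordered h₃ h₁ h₂ l31 l12
  · exact goodPt_ordered h₂ h₁ h₃ l21 l13
  · omega
  · exact goodPt_ordered h₂ h₃ h₁ l23 l31
  · exact goodPt_ordered h₃ h₂ h₁ l32 l21

lemma ncard_le_two_of_no_three {α : Type} {s : Set α}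
    (h : ∀ a ∈ s, ∀ b ∈ s, ∀ c ∈ s, a ≠ b → a ≠ c → b ≠ c → False) :
    s.ncard ≤ 2 := by
  rcases s.eq_empty_or_nonempty with rfl | ⟨p, hp⟩
  · simp
  by_cases hq : ∃ q ∈ s, q ≠ p
  · obtain ⟨q, hq, hqp⟩ := hq
    have hsub : s ⊆ {p, q} := by
      intro r hr
      by_contra hrn
      simp only [Set.mem_insert_iff, Set.mem_singleton_iff, not_or] at hrn
      exact h p hp q hq r hr (Ne.symm hqp) (Ne.symm hrn.1) (Ne.symm hrn.2)
    calc s.ncard ≤ ({p, q} : Set α).ncard :=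
          Set.ncard_le_ncard hsub ((Set.finite_singleton q).insert p)
      _ ≤ 2 := by rw [Set.ncard_pair (Ne.symm hqp)]
  · push_neg at hq
    have hsub : s ⊆ {p} := fun r hr => hq r hr
    calc s.ncard ≤ ({p} : Set α).ncard :=
          Set.ncard_le_ncard hsub (Set.finite_singleton p)
      _ ≤ 2 := by simp

lemma parts_disjoint {α : Type} {P : Set (Set α)} (hP : Setoid.IsPartition P)
    {Y Y' : Set α} (hY : Y ∈ P) (hY' : Y' ∈ P) (hne : Y ≠ Y') {x : α}
    (hx : x ∈ Y) (hx' : x ∈ Y') : False := by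
  obtain ⟨b, -, hb⟩ := hP.2 x
  exact hne ((hb Y ⟨hY, hx⟩).trans (hb Y' ⟨hY', hx'⟩).symm)

lemma parts_finite {α : Type} (c : ContractionSeq α) (i : Fin (c.n + 1)) :
    (c.P i).Finite := by
  induction i using Fin.reverseInduction with
  | last => rw [c.last]; exact Set.finite_singleton _
  | cast i ih =>
    obtain ⟨X, Y, hX, hY, hne, hstep⟩ := c.step i
    have hsub : c.P i.castSucc ⊆ insert X (insert Y (c.P i.succ)) := by
      intro Z hZ
      by_cases hZX : Z = X
      · exact Or.inl hZX
      by_cases hZY : Z = Y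
      · exact Or.inr (Or.inl hZY)
      refine Or.inr (Or.inr ?_)
      rw [hstep]
      exact Or.inr ⟨hZ, by simp [hZX, hZY]⟩
    exact ((ih.insert Y).insert X).subset hsub

lemma homogPair_imp_homog {𝒢 : TemporalGraph V τ} {X Y : Set (V × Fin τ)}
    (h : homogPair (adjGraph 𝒢) (succGraph 𝒢) X Y) : homog 𝒢.expansion X Y := by
  rcases h with h | h | h
  · exact Or.inl fun x hx y hy =>
      (expansion_adj_iff 𝒢 x y).mpr (Or.inl (h x hx y hy))
  · exact Or.inl fun x hx y hy =>
      (expansion_adj_iff 𝒢 x y).mpr (Or.inr (h x hx y hy))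
  · refine Or.inr fun x hx y hy hadj => ?_
    rcases (expansion_adj_iff 𝒢 x y).mp hadj with h' | h'
    · exact (h x hx y hy).1 h'
    · exact (h x hx y hy).2 h'

/-- The key counting statement: any `d`-sequence for the expansion is a
`(d+2)`-sequence for the pair structure. -/
lemma key_count (𝒢 : TemporalGraph V τ) (c : ContractionSeq (V × Fin τ)) (d : ℕ)
    (h : c.RedDegLE (homog 𝒢.expansion) d) :
    c.RedDegLE (homogPair (adjGraph 𝒢) (succGraph 𝒢)) (d + 2) := by
  intro i X hX
  set Rh : Set (Set (V × Fin τ)) :=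
    {Y | Y ∈ c.P i ∧ Y ≠ X ∧ ¬ homog 𝒢.expansion X Y} with hRh
  set R2 : Set (Set (V × Fin τ)) :=
    {Y | Y ∈ c.P i ∧ Y ≠ X ∧ ∃ b ∈ Y, GoodPt 𝒢 X b} with hR2
  have hPfin := parts_finite c i
  have hsub : {Y | Y ∈ c.P i ∧ Y ≠ X ∧ ¬ homogPair (adjGraph 𝒢) (succGraph 𝒢) X Y}
      ⊆ Rh ∪ R2 := by
    rintro Y ⟨hYP, hYX, hnp⟩
    by_cases hh : homog 𝒢.expansion X Y
    · right
      rcases hh with hcomp | hanti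
      · obtain ⟨x, hx, y, hy, hxy⟩ : ∃ x ∈ X, ∃ y ∈ Y, ¬ (adjGraph 𝒢).Adj x y := by
          by_contra hc
          push_neg at hc
          exact hnp (Or.inl hc)
        have hsucc : (succGraph 𝒢).Adj x y :=
          ((expansion_adj_iff 𝒢 x y).mp (hcomp x hx y hy)).resolve_left hxy
        exact ⟨hYP, hYX, y, hy, ⟨x, hx, hsucc⟩, fun a ha => hcomp a ha y hy⟩
      · exfalso
        refine hnp (Or.inr (Or.inr fun x hx y hy => ?_))
        refine ⟨fun h' => hanti x hx y hy ?_, fun h' => hanti x hx y hy ?_⟩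
        · exact (expansion_adj_iff 𝒢 x y).mpr (Or.inl h')
        · exact (expansion_adj_iff 𝒢 x y).mpr (Or.inr h')
    · exact Or.inl ⟨hYP, hYX, hh⟩
  have hR2card : R2.ncard ≤ 2 := by
    apply ncard_le_two_of_no_three
    rintro Y₁ ⟨hY₁, -, b₁, hb₁, g₁⟩ Y₂ ⟨hY₂, -, b₂, hb₂, g₂⟩ Y₃ ⟨hY₃, -, b₃, hb₃, g₃⟩
      n12 n13 n23
    have hp := c.isPartition i
    refine goodPt_three g₁ g₂ g₃ ?_ ?_ ?_
    · rintro rfl; exact parts_disjoint hp hY₁ hY₂ n12 hb₁ hb₂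
    · rintro rfl; exact parts_disjoint hp hY₁ hY₃ n13 hb₁ hb₃
    · rintro rfl; exact parts_disjoint hp hY₂ hY₃ n23 hb₂ hb₃
  have hRhcard : Rh.ncard ≤ d := h i X hX
  calc {Y | Y ∈ c.P i ∧ Y ≠ X ∧ ¬ homogPair (adjGraph 𝒢) (succGraph 𝒢) X Y}.ncard
      ≤ (Rh ∪ R2).ncard :=
        Set.ncard_le_ncard hsub
          ((hPfin.subset fun Y hY => hY.1).union (hPfin.subset fun Y hY => hY.1))
    _ ≤ Rh.ncard + R2.ncard := Set.ncard_union_le Rh R2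
    _ ≤ d + 2 := add_le_add hRhcard hR2card

lemma pair_to_homog (𝒢 : TemporalGraph V τ) (c : ContractionSeq (V × Fin τ)) (d : ℕ)
    (h : c.RedDegLE (homogPair (adjGraph 𝒢) (succGraph 𝒢)) d) :
    c.RedDegLE (homog 𝒢.expansion) d := by
  intro i X hX
  refine le_trans (Set.ncard_le_ncard ?_ ((parts_finite c i).subset fun Y hY => hY.1))
    (h i X hX)
  rintro Y ⟨hYP, hYX, hh⟩
  exact ⟨hYP, hYX, fun hp => hh (homogPair_imp_homog hp)⟩

end Aux

/-- tww(𝒢_→) ≤ tww(S(𝒢)) ≤ tww(𝒢_→) + 2, and any d-contraction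
sequence of 𝒢_→ is a (d+2)-contraction sequence of the structure S(𝒢). -/
theorem twinwidth_structure_sandwich {V : Type} {τ : ℕ}
    (𝒢 : TemporalGraph V τ) :
    twinwidth 𝒢.expansion ≤ twinwidthPair (adjGraph 𝒢) (succGraph 𝒢) ∧
    twinwidthPair (adjGraph 𝒢) (succGraph 𝒢) ≤ twinwidth 𝒢.expansion + 2 ∧
    (∀ (c : ContractionSeq (V × Fin τ)) (d : ℕ),
      c.RedDegLE (homog 𝒢.expansion) d →
      c.RedDegLE (homogPair (adjGraph 𝒢) (succGraph 𝒢)) (d + 2)) := by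
  refine ⟨?_, ?_, fun c d h => key_count 𝒢 c d h⟩
  · apply le_sInf
    rintro w ⟨d, ⟨c, hc⟩, rfl⟩
    exact sInf_le ⟨d, ⟨c, pair_to_homog 𝒢 c d hc⟩, rfl⟩
  · by_cases hne : ∃ d : ℕ, TwinwidthLE 𝒢.expansion d
    · classical
      obtain ⟨c, hc⟩ := Nat.find_spec hne
      set d₀ := Nat.find hne
      have h1 : twinwidthPair (adjGraph 𝒢) (succGraph 𝒢) ≤ (d₀ : ℕ∞) + 2 :=
        sInf_le ⟨d₀ + 2, ⟨c, key_count 𝒢 c d₀ hc⟩, by push_cast; ring⟩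
      have h2 : (d₀ : ℕ∞) ≤ twinwidth 𝒢.expansion := by
        apply le_sInf
        rintro w ⟨d, hd, rfl⟩
        exact_mod_cast Nat.find_min' hne hd
      exact h1.trans (add_le_add_left h2 2)
    · have hempty : {w : ℕ∞ | ∃ d : ℕ, TwinwidthLE 𝒢.expansion d ∧ w = d} = ∅ := by
        ext w
        simp only [Set.mem_setOf_eq, Set.mem_empty_iff_false, iff_false, not_exists]
        rintro d ⟨hd, -⟩
        exact hne ⟨d, hd⟩
      rw [twinwidth, hempty, sInf_empty, top_add]
      exact le_top
end

section
/- If in a contraction sequence of the static expansion graph 𝒢_→ there is a black edge between classes v and w (i.e., every vertex of v(𝒢) is adjacent in 𝒢_→ to every vertex of w(𝒢), and both are nonempty), and the corresponding edge is red in the contraction of the structure S(𝒢) (i.e., the adjacency between v(𝒢) and w(𝒢) mixes the relations adj and succ), then there exist a vertex u ∈ V and a time t with (u,t) ∈ v(𝒢) and (u,t') ∈ w(𝒢) for some t' ∈ {t−1, t+1}. -/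
open SimpleGraph

/-- if two disjoint nonempty classes X, Y are fully adjacent in
𝒢_→ (a black edge) but their adjacency mixes the relations adj and succ (a red
edge in S(𝒢)), then some vertex u has a copy (u,t) in X and a copy (u,t') in Y
with t' ∈ {t−1, t+1}. -/
theorem mixed_black_edge_gives_succ_pair {V : Type} {τ : ℕ}
    (𝒢 : TemporalGraph V τ) (X Y : Set (V × Fin τ))
    (hX : X.Nonempty) (hY : Y.Nonempty) (hXY : Disjoint X Y)
    (hblack : ∀ a ∈ X, ∀ b ∈ Y, 𝒢.expansion.Adj a b)
    (hmix : ¬ homogPair (adjGraph 𝒢) (succGraph 𝒢) X Y) :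
    ∃ (u : V) (t t' : Fin τ), (u, t) ∈ X ∧ (u, t') ∈ Y ∧
      ((t' : ℕ) = (t : ℕ) + 1 ∨ (t : ℕ) = (t' : ℕ) + 1) := by
  have h1 : ∃ x ∈ X, ∃ y ∈ Y, ¬ (adjGraph 𝒢).Adj x y := by
    by_contra h
    push_neg at h
    exact hmix (Or.inl h)
  obtain ⟨x, hx, y, hy, hnadj⟩ := h1
  have hb := hblack x hx y hy
  rw [TemporalGraph.expansion, SimpleGraph.fromRel_adj] at hb
  rw [adjGraph, SimpleGraph.fromRel_adj] at hnadj
  push_neg at hnadj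
  have hs : (x.1 = y.1 ∧ (x.2 : ℕ) + 1 = (y.2 : ℕ)) ∨
      (y.1 = x.1 ∧ (y.2 : ℕ) + 1 = (x.2 : ℕ)) := by
    obtain ⟨hne, h⟩ := hb
    have := hnadj hne
    tauto
  rcases hs with ⟨he, ht⟩ | ⟨he, ht⟩
  · exact ⟨x.1, x.2, y.2, by simpa using hx, by simp [he]; simpa using hy,
      Or.inl ht.symm⟩
  · exact ⟨x.1, x.2, y.2, by simpa using hx, by simp [← he]; simpa using hy,
      Or.inr ht.symm⟩
end
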